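/- arXiv:2001.07422 — 5 statements merged into one kernel-verified Lean document; each statement's English description precedes it below -/
import Mathlib

section
/- Let d ≥ 3 and α ∈ (0,2). Let μ be a bounded probability density on ℝ^d and let (P_u)_{u>0} be a family of Markov kernels on ℝ^d such that: (i) the measure μ(x)dx is invariant for every P_u; (ii) ‖P_u f‖_{L²(μ)} ≤ ‖f‖_{L²(μ)} for every f ∈ L²(μ) and u > 0; (iii) for every u ∈ (0,1], P_u(x,·) has a density p_u(x,·) with respect to Lebesgue measure satisfying p_u(x,y) ≤ c₀ (u^{−d/2} e^{−λ₀|y−x|²/u} + u/(u^{1/2} + |y−x|)^{d+α}) for all x, y, with constants c₀, λ₀ > 0; (iv) for every u ≥ 1, P_u(x,·) has a density bounded by a constant c₀′; (v) there exist c > 0, ρ > 0 such that ∫_{ℝ^d} |P_u g(x) − ∫ g μ dx| μ(x) dx ≤ c e^{−ρu} ‖g‖_∞ for every bounded measurable g and u > 0. Then there is a constant C, independent of f and T, such that for every T > 0 and every bounded measurable f : ℝ^d → ℝ whose support S has Lebesgue measure |S| < 1: 2 ∫_0^T (T−u) |⟨P_u f, f⟩_μ − (∫ f μ dx)²| du ≤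 C T ‖f‖_∞² |S|^{1+2/d}. -/
open MeasureTheory ProbabilityTheory Real
open scoped ENNReal NNReal

section Aux

/-- interpolation: `min A B ≤ A^θ B^(1-θ)`. -/
lemma aux_min_interp {A B θ : ℝ} (hA : 0 ≤ A) (hB : 0 ≤ B) (hθ0 : 0 ≤ θ) (hθ1 : θ ≤ 1) :
    min A B ≤ A ^ θ * B ^ (1 - θ) := by
  rcases eq_or_lt_of_le (le_min hA hB) with h | h
  · rw [← h]; positivity
  · calc min A B = min A B ^ θ * min A B ^ (1 - θ) := by
          rw [← Real.rpow_add h, add_sub_cancel, Real.rpow_one]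
      _ ≤ A ^ θ * B ^ (1 - θ) := by
          apply mul_le_mul
          · exact Real.rpow_le_rpow h.le (min_le_left _ _) hθ0
          · exact Real.rpow_le_rpow h.le (min_le_right _ _) (by linarith)
          · positivity
          · positivity

lemma aux_exp_int {a T : ℝ} (ha : 0 < a) (hT : 0 ≤ T) :
    (∫ u in Set.Ioc (0:ℝ) T, Real.exp (-a * u)) ≤ 1 / a := by
  rw [← intervalIntegral.integral_of_le hT]
  have hderiv : ∀ x ∈ Set.uIcc (0:ℝ) T,
      HasDerivAt (fun u => -Real.exp (-a * u) / a) (Real.exp (-a * x)) x := by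
    intro x _
    have h1 : HasDerivAt (fun u : ℝ => -a * u) (-a) x := by
      simpa using (hasDerivAt_id x).const_mul (-a)
    have h2 := (h1.exp).neg.div_const a
    refine h2.congr_deriv ?_
    field_simp
  have hint : IntervalIntegrable (fun u => Real.exp (-a * u)) volume 0 T :=
    (Real.continuous_exp.comp (continuous_const.mul continuous_id)).intervalIntegrable 0 T
  rw [intervalIntegral.integral_eq_sub_of_hasDerivAt hderiv hint]
  have h0 : Real.exp (-a * 0) = 1 := by norm_num
  have h1 : 0 < Real.exp (-a * T) := Real.exp_pos _
  rw [h0, div_sub_div_same]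
  gcongr
  linarith [Real.exp_pos (-a * T)]

lemma aux_min_int {K s T : ℝ} (hK : 0 ≤ K) (hs : 0 < s) (hs1 : s ≤ 1) {d : ℕ}
    (hd2 : (2:ℝ) < d) :
    ∫ u in Set.Ioc (0:ℝ) T, min 1 (K * s * u ^ (-(d:ℝ)/2))
      ≤ (1 + 2 * K / ((d:ℝ) - 2)) * s ^ (2/(d:ℝ)) := by
  have hd0 : (0:ℝ) < d := by linarith
  set r : ℝ := -(d:ℝ)/2 with hr
  have hrlt : r < -1 := by rw [hr]; linarith
  set t : ℝ := s ^ (2/(d:ℝ)) with ht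
  have ht0 : 0 < t := Real.rpow_pos_of_pos hs _
  have ht1 : t ≤ 1 := Real.rpow_le_one hs.le hs1 (by positivity)
  have hcont : ContinuousOn (fun u : ℝ => min 1 (K * s * u ^ r)) (Set.Ioi 0) :=
    continuousOn_const.inf
      (continuousOn_const.mul (ContinuousOn.rpow_const continuousOn_id
        (fun x hx => Or.inl (ne_of_gt hx))))
  -- nonneg on Ioi 0
  have hnn : ∀ u ∈ Set.Ioi (0:ℝ), 0 ≤ min 1 (K * s * u ^ r) := by
    intro u hu
    exact le_min zero_le_one
      (mul_nonneg (mul_nonneg hK hs.le) (Real.rpow_nonneg (le_of_lt hu) r))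
  -- integrable on Ioc 0 t
  have hint1 : IntegrableOn (fun u : ℝ => min 1 (K * s * u ^ r)) (Set.Ioc 0 t) := by
    apply Integrable.mono' (g := fun _ => (1:ℝ))
      (integrableOn_const measure_Ioc_lt_top.ne)
      ((hcont.mono (Set.Ioc_subset_Ioi_self)).aestronglyMeasurable measurableSet_Ioc)
    filter_upwards [ae_restrict_mem measurableSet_Ioc] with u hu
    rw [Real.norm_eq_abs, abs_of_nonneg (hnn u hu.1)]
    exact min_le_left _ _
  -- integrable on Ioi t
  have hrpow_int : IntegrableOn (fun u : ℝ => u ^ r) (Set.Ioi t) :=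
    integrableOn_Ioi_rpow_of_lt hrlt ht0
  have hint2 : IntegrableOn (fun u : ℝ => min 1 (K * s * u ^ r)) (Set.Ioi t) := by
    apply Integrable.mono' (g := fun u => K * s * u ^ r) ((hrpow_int.const_mul (K*s)))
      ((hcont.mono (Set.Ioi_subset_Ioi ht0.le)).aestronglyMeasurable measurableSet_Ioi)
    filter_upwards [ae_restrict_mem measurableSet_Ioi] with u hu
    rw [Real.norm_eq_abs, abs_of_nonneg (hnn u (lt_trans ht0 hu))]
    exact min_le_right _ _
  have hunion : Set.Ioc (0:ℝ) t ∪ Set.Ioi t = Set.Ioi 0 := Set.Ioc_union_Ioi_eq_Ioi ht0.le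
  have hintIoi : IntegrableOn (fun u : ℝ => min 1 (K * s * u ^ r)) (Set.Ioi 0) := by
    rw [← hunion]; exact hint1.union hint2
  -- step 1 : restrict to Ioi 0
  have step1 : ∫ u in Set.Ioc (0:ℝ) T, min 1 (K * s * u ^ r)
      ≤ ∫ u in Set.Ioi (0:ℝ), min 1 (K * s * u ^ r) := by
    apply setIntegral_mono_set hintIoi
    · filter_upwards [ae_restrict_mem measurableSet_Ioi] with u hu using hnn u hu
    · exact HasSubset.Subset.eventuallyLE Set.Ioc_subset_Ioi_self
  -- step 2 : split
  have step2 : ∫ u in Set.Ioi (0:ℝ), min 1 (K * s * u ^ r)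
      = (∫ u in Set.Ioc (0:ℝ) t, min 1 (K * s * u ^ r))
        + ∫ u in Set.Ioi t, min 1 (K * s * u ^ r) := by
    rw [← hunion, setIntegral_union (Set.Ioc_disjoint_Ioi le_rfl) measurableSet_Ioi hint1 hint2]
  -- piece 1
  have p1 : ∫ u in Set.Ioc (0:ℝ) t, min 1 (K * s * u ^ r) ≤ t := by
    calc ∫ u in Set.Ioc (0:ℝ) t, min 1 (K * s * u ^ r)
        ≤ ∫ _u in Set.Ioc (0:ℝ) t, (1:ℝ) := by
          apply setIntegral_mono_on hint1
            (integrableOn_const measure_Ioc_lt_top.ne) measurableSet_Ioc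
          intro u hu; exact min_le_left _ _
      _ = t := by
          simp [Real.volume_Ioc, ENNReal.toReal_ofReal ht0.le, ht0.le]
  -- piece 2
  have p2 : ∫ u in Set.Ioi t, min 1 (K * s * u ^ r) ≤ 2 * K / ((d:ℝ) - 2) * t ^ (r+1) * s := by
    have : ∫ u in Set.Ioi t, min 1 (K * s * u ^ r) ≤ ∫ u in Set.Ioi t, K * s * u ^ r := by
      apply setIntegral_mono_on hint2 (hrpow_int.const_mul _) measurableSet_Ioi
      intro u hu; exact min_le_right _ _
    refine this.trans ?_
    rw [integral_const_mul, integral_Ioi_rpow_of_lt hrlt ht0]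
    have hr1 : r + 1 < 0 := by linarith
    rw [neg_div, ← div_neg]
    have : -(r+1) = ((d:ℝ)-2)/2 := by rw [hr]; ring
    rw [this]
    rw [div_div_eq_mul_div]
    have : K * s * (t ^ (r + 1) * 2 / (↑d - 2)) = 2 * K / (↑d - 2) * t ^ (r + 1) * s := by
      ring
    rw [← this]
  -- arithmetic
  have key : t + 2 * K / ((d:ℝ) - 2) * t ^ (r+1) * s = (1 + 2 * K / ((d:ℝ) - 2)) * t := by
    have htr : t ^ (r+1) * s = t := by
      have h1 : t ^ (r+1) * s = s ^ (2/(d:ℝ) * (r+1) + 1) := by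
        rw [ht, ← Real.rpow_mul hs.le, Real.rpow_add hs, Real.rpow_one]
      rw [h1, ht]
      congr 1
      rw [hr]
      field_simp
      ring
    rw [mul_assoc, htr]; ring
  calc ∫ u in Set.Ioc (0:ℝ) T, min 1 (K * s * u ^ r)
      ≤ t + 2 * K / ((d:ℝ) - 2) * t ^ (r+1) * s := by
        rw [step2] at step1; linarith
    _ = (1 + 2 * K / ((d:ℝ) - 2)) * t := key

end Aux

set_option maxHeartbeats 2000000

/-- Variance-covariance bound, case `d ≥ 3`: under invariance,
L²(μ)-contractivity, the two-regime transition-density bounds and exponential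
ergodicity, `2∫_0^T (T-u)|⟨P_u f,f⟩_μ - (∫ fμ)²| du ≤ C T ‖f‖_∞² |S|^{1+2/d}`
for every bounded measurable `f` with support of Lebesgue measure `< 1`. -/
theorem stmt5 (d : ℕ) (hd : 3 ≤ d) (α : ℝ) (hα : α ∈ Set.Ioo (0 : ℝ) 2)
    (μ : EuclideanSpace ℝ (Fin d) → ℝ) (hμ_meas : Measurable μ)
    (hμ_nonneg : ∀ x, 0 ≤ μ x) (Cμ : ℝ) (hμ_bdd : ∀ x, μ x ≤ Cμ)
    (hμ_prob : ∫ x, μ x = 1)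
    (P : ℝ → Kernel (EuclideanSpace ℝ (Fin d)) (EuclideanSpace ℝ (Fin d)))
    (hP_markov : ∀ u > (0 : ℝ), IsMarkovKernel (P u))
    -- (i) invariance of μ(x)dx
    (h_inv : ∀ u > (0 : ℝ), ∀ f : EuclideanSpace ℝ (Fin d) → ℝ, ∀ Mf : ℝ,
      Measurable f → (∀ x, |f x| ≤ Mf) →
      ∫ x, (∫ y, f y ∂(P u x)) * μ x = ∫ x, f x * μ x)
    -- (ii) contraction on L²(μ)
    (h_contr : ∀ u > (0 : ℝ), ∀ f : EuclideanSpace ℝ (Fin d) → ℝ, Measurable f →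
      Integrable (fun x => f x ^ 2 * μ x) →
      ∫ x, (∫ y, f y ∂(P u x)) ^ 2 * μ x ≤ ∫ x, f x ^ 2 * μ x)
    -- (iii) small-time density bound
    (c₀ lam₀ : ℝ) (hc₀ : 0 < c₀) (hlam₀ : 0 < lam₀)
    (h_dens : ∀ u ∈ Set.Ioc (0 : ℝ) 1, ∀ x, ∃ p : EuclideanSpace ℝ (Fin d) → ℝ,
      Measurable p ∧
      (∀ y, 0 ≤ p y ∧ p y ≤ c₀ * (u ^ (-(d : ℝ) / 2) * Real.exp (-lam₀ * ‖y - x‖ ^ 2 / u)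
        + u / (Real.sqrt u + ‖y - x‖) ^ ((d : ℝ) + α))) ∧
      (P u) x = volume.withDensity (fun y => ENNReal.ofReal (p y)))
    -- (iv) bounded density for u ≥ 1
    (c₀' : ℝ)
    (h_dens1 : ∀ u : ℝ, 1 ≤ u → ∀ x, ∃ p : EuclideanSpace ℝ (Fin d) → ℝ,
      Measurable p ∧ (∀ y, 0 ≤ p y ∧ p y ≤ c₀') ∧
      (P u) x = volume.withDensity (fun y => ENNReal.ofReal (p y)))
    -- (v) exponential ergodicity
    (c ρ : ℝ) (hc : 0 < c) (hρ : 0 < ρ)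
    (h_erg : ∀ u > (0 : ℝ), ∀ g : EuclideanSpace ℝ (Fin d) → ℝ, ∀ Mg : ℝ,
      Measurable g → (∀ x, |g x| ≤ Mg) →
      ∫ x, |(∫ y, g y ∂(P u x)) - ∫ z, g z * μ z| * μ x ≤ c * Real.exp (-ρ * u) * Mg) :
    ∃ C : ℝ, ∀ T > (0 : ℝ), ∀ f : EuclideanSpace ℝ (Fin d) → ℝ, ∀ Mf : ℝ,
      Measurable f → (∀ x, |f x| ≤ Mf) → volume (Function.support f) < 1 →
      2 * (∫ u in Set.Icc 0 T, (T - u) *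
          |(∫ x, (∫ y, f y ∂(P u x)) * f x * μ x) - (∫ x, f x * μ x) ^ 2|)
        ≤ C * T * Mf ^ 2 *
          (volume (Function.support f)).toReal ^ (1 + 2 / (d : ℝ)) := by
  have hd2 : (2:ℝ) < d := by exact_mod_cast lt_of_lt_of_le (by norm_num) hd
  have hd0 : (0:ℝ) < d := by linarith
  have hCμ : 0 ≤ Cμ := le_trans (hμ_nonneg 0) (hμ_bdd 0)
  have hc₀' : 0 ≤ c₀' := by
    obtain ⟨p, _, hp, _⟩ := h_dens1 1 le_rfl 0
    exact le_trans (hp 0).1 (hp 0).2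
  set θ : ℝ := 1/2 - 1/(d:ℝ) with hθdef
  have hθpos : 0 < θ := by
    rw [hθdef]
    have : 1/(d:ℝ) < 1/2 := by
      apply div_lt_div_of_pos_left one_pos (by norm_num) hd2
    linarith
  have hθ1 : θ ≤ 1 := by
    rw [hθdef]
    have : 0 < 1/(d:ℝ) := by positivity
    linarith
  have h2θ : 2*(1-θ) = 1 + 2/(d:ℝ) := by rw [hθdef]; ring
  set K : ℝ := 2*c₀ with hKdef
  have hK : 0 ≤ K := by positivity
  set D : ℝ := c₀'*Cμ + Cμ^2 with hDdef
  have hD : 0 ≤ D := by positivity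
  set a : ℝ := ρ * θ with hadef
  have ha : 0 < a := mul_pos hρ hθpos
  set c₁ : ℝ := Cμ * (1 + 2*K/((d:ℝ)-2)) with hc₁def
  set c₂ : ℝ := Cμ^2 * Real.exp ρ / ρ with hc₂def
  set c₃ : ℝ := c ^ θ * D ^ (1-θ) / a with hc₃def
  have hc₁ : 0 ≤ c₁ := by
    rw [hc₁def]
    have : 0 ≤ 2*K/((d:ℝ)-2) := by
      apply div_nonneg (by positivity); linarith
    nlinarith
  have hc₂ : 0 ≤ c₂ := by positivity
  have hc₃ : 0 ≤ c₃ := by positivity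
  refine ⟨2*(c₁+c₂+c₃), ?_⟩
  intro T hT f Mf hf hfM hvol
  set S : Set (EuclideanSpace ℝ (Fin d)) := Function.support f with hSdef
  have hS : MeasurableSet S := by
    rw [hSdef, Function.support_eq_preimage]
    exact (hf (measurableSet_singleton 0)).compl
  have hSfin : volume S < ⊤ := lt_of_lt_of_le hvol le_top
  set s : ℝ := (volume S).toReal with hsdef
  have hs0 : 0 ≤ s := ENNReal.toReal_nonneg
  have hs1 : s ≤ 1 := by
    rw [hsdef]
    calc (volume S).toReal ≤ (1 : ℝ≥0∞).toReal := by
          apply ENNReal.toReal_mono (by simp) hvol.le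
      _ = 1 := by simp
  have hMf : 0 ≤ Mf := le_trans (abs_nonneg _) (hfM 0)
  have hsupp : ∀ x ∉ S, f x = 0 := fun x hx => Function.notMem_support.mp hx
  set m : ℝ := ∫ x, f x * μ x with hmdef
  -- s = 0 case
  rcases eq_or_lt_of_le hs0 with hs | hs
  · have hvol0 : volume S = 0 := by
      rcases (ENNReal.toReal_eq_zero_iff _).mp hs.symm with h | h
      · exact h
      · exact absurd h hSfin.ne
    have hf0 : ∀ᵐ x, f x = 0 := by
      rw [ae_iff]
      convert hvol0 using 2
      rfl
    have hm0 : m = 0 := by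
      rw [hmdef]
      apply integral_eq_zero_of_ae
      filter_upwards [hf0] with x hx
      simp [hx]
    have hF0 : ∀ u : ℝ, (∫ x, (∫ y, f y ∂(P u x)) * f x * μ x) = 0 := by
      intro u
      apply integral_eq_zero_of_ae
      filter_upwards [hf0] with x hx
      simp [hx]
    have : (∫ u in Set.Icc 0 T, (T - u) *
        |(∫ x, (∫ y, f y ∂(P u x)) * f x * μ x) - (∫ x, f x * μ x) ^ 2|) = 0 := by
      have : ∀ u : ℝ, (T - u) *
          |(∫ x, (∫ y, f y ∂(P u x)) * f x * μ x) - (∫ x, f x * μ x) ^ 2| = 0 := by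
        intro u
        rw [hF0 u, ← hmdef, hm0]
        simp
      simp only [this]
      simp
    rw [this, ← hs, Real.zero_rpow (by positivity)]
    simp
  -- main case s > 0
  have habs : ∀ (g : EuclideanSpace ℝ (Fin d) → ℝ), |∫ x, g x| ≤ ∫ x, |g x| := fun g => by
    simpa [Real.norm_eq_abs] using norm_integral_le_integral_norm g
  have hμ_int : Integrable μ := integrable_of_integral_eq_one hμ_prob
  have hind : ∀ b : ℝ, Integrable (S.indicator (fun _ => b)) :=
    fun b => (integrable_indicator_iff hS).2 (integrableOn_const hSfin.ne)
  have hind_val : ∀ b : ℝ, ∫ x, S.indicator (fun _ => b) x = b * s := by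
    intro b
    rw [integral_indicator_const b hS, smul_eq_mul, hsdef, measureReal_def]
    ring
  have hfμ_ptw : ∀ x, |f x * μ x| ≤ S.indicator (fun _ => Mf*Cμ) x := by
    intro x
    by_cases hx : x ∈ S
    · rw [Set.indicator_of_mem hx, abs_mul, abs_of_nonneg (hμ_nonneg x)]
      exact mul_le_mul (hfM x) (hμ_bdd x) (hμ_nonneg x) hMf
    · rw [Set.indicator_of_notMem hx, hsupp x hx]
      simp
  have hPf_meas : ∀ u, 0 < u → Measurable (fun x => ∫ y, f y ∂(P u x)) := by
    intro u hu
    haveI := hP_markov u hu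
    exact (MeasureTheory.StronglyMeasurable.integral_kernel_prod_right (κ := P u)
      (f := fun _ y => f y)
      (hf.stronglyMeasurable.comp_measurable measurable_snd)).measurable
  have hPf_bdd : ∀ u, 0 < u → ∀ x, |∫ y, f y ∂(P u x)| ≤ Mf := by
    intro u hu x
    haveI := hP_markov u hu
    calc |∫ y, f y ∂(P u x)| = ‖∫ y, f y ∂(P u x)‖ := (Real.norm_eq_abs _).symm
      _ ≤ Mf * ((P u x) Set.univ).toReal := norm_integral_le_of_norm_le_const
          (Filter.Eventually.of_forall (fun y => by rw [Real.norm_eq_abs]; exact hfM y))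
      _ = Mf := by simp
  have hfμ_int : Integrable (fun x => f x * μ x) := by
    apply Integrable.mono' (hind (Mf*Cμ)) ((hf.mul hμ_meas).aestronglyMeasurable)
    exact Filter.Eventually.of_forall (fun x => by rw [Real.norm_eq_abs]; exact hfμ_ptw x)
  have hm_bdd : |m| ≤ Mf * Cμ * s := by
    rw [hmdef]
    calc |∫ x, f x * μ x| ≤ ∫ x, |f x * μ x| := habs _
      _ ≤ ∫ x, S.indicator (fun _ => Mf*Cμ) x :=
          integral_mono hfμ_int.abs (hind _) hfμ_ptw
      _ = Mf * Cμ * s := by rw [hind_val]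
  have hPffμ_int : ∀ u, 0 < u →
      Integrable (fun x => (∫ y, f y ∂(P u x)) * f x * μ x) := by
    intro u hu
    apply Integrable.mono' (hind (Mf*(Mf*Cμ)))
      (((hPf_meas u hu).mul hf).mul hμ_meas).aestronglyMeasurable
    apply Filter.Eventually.of_forall
    intro x
    show ‖(∫ y, f y ∂(P u x)) * f x * μ x‖ ≤ S.indicator (fun _ => Mf*(Mf*Cμ)) x
    rw [Real.norm_eq_abs, mul_assoc, abs_mul]
    by_cases hx : x ∈ S
    · rw [Set.indicator_of_mem hx]
      refine mul_le_mul (hPf_bdd u hu x) ?_ (abs_nonneg _) hMf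
      have := hfμ_ptw x
      rwa [Set.indicator_of_mem hx] at this
    · rw [Set.indicator_of_notMem hx, hsupp x hx]
      simp
  -- generic bound on F(u) from a uniform bound on P_u f
  have hF_le : ∀ u, 0 < u → ∀ B : ℝ, 0 ≤ B → (∀ x, |∫ y, f y ∂(P u x)| ≤ B) →
      |∫ x, (∫ y, f y ∂(P u x)) * f x * μ x| ≤ B * (Mf * Cμ * s) := by
    intro u hu B hB hPfB
    calc |∫ x, (∫ y, f y ∂(P u x)) * f x * μ x|
        ≤ ∫ x, |(∫ y, f y ∂(P u x)) * f x * μ x| := habs _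
      _ ≤ ∫ x, S.indicator (fun _ => B*(Mf*Cμ)) x := by
          apply integral_mono (hPffμ_int u hu).abs (hind _)
          intro x
          show |(∫ y, f y ∂(P u x)) * f x * μ x| ≤ S.indicator (fun _ => B*(Mf*Cμ)) x
          rw [mul_assoc, abs_mul]
          by_cases hx : x ∈ S
          · rw [Set.indicator_of_mem hx]
            refine mul_le_mul (hPfB x) ?_ (abs_nonneg _) hB
            have := hfμ_ptw x
            rwa [Set.indicator_of_mem hx] at this
          · rw [Set.indicator_of_notMem hx, hsupp x hx]
            simp
      _ = B*(Mf*Cμ)*s := hind_val _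
      _ = B*(Mf*Cμ*s) := by ring
  -- small-time density bound on P_u f
  have hA : ∀ u, u ∈ Set.Ioc (0:ℝ) 1 → ∀ x,
      |∫ y, f y ∂(P u x)| ≤ (K * u ^ (-(d:ℝ)/2) * Mf) * s := by
    intro u hu x
    obtain ⟨p, hpmeas, hpb, hPeq⟩ := h_dens u hu x
    have hu0 : (0:ℝ) < u := hu.1
    have hup : (0:ℝ) ≤ u ^ (-(d:ℝ)/2) := Real.rpow_nonneg hu0.le _
    have hple : ∀ y, p y ≤ K * u ^ (-(d:ℝ)/2) := by
      intro y
      have h1 := (hpb y).2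
      have hexp : Real.exp (-lam₀ * ‖y - x‖ ^ 2 / u) ≤ 1 := by
        rw [Real.exp_le_one_iff]
        apply div_nonpos_of_nonpos_of_nonneg _ hu0.le
        have : (0:ℝ) ≤ lam₀ * ‖y - x‖ ^ 2 := by positivity
        linarith
      have hterm2 : u / (Real.sqrt u + ‖y - x‖) ^ ((d:ℝ) + α) ≤ u ^ (-(d:ℝ)/2) := by
        have hsq : (0:ℝ) < Real.sqrt u := Real.sqrt_pos.2 hu0
        have hexp_pos : (0:ℝ) < (d:ℝ) + α := by linarith [hα.1]
        have h2 : (Real.sqrt u) ^ ((d:ℝ)+α) ≤ (Real.sqrt u + ‖y - x‖) ^ ((d:ℝ)+α) :=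
          Real.rpow_le_rpow hsq.le (le_add_of_nonneg_right (norm_nonneg _)) hexp_pos.le
        have h3 : u / (Real.sqrt u + ‖y-x‖) ^ ((d:ℝ)+α) ≤ u / (Real.sqrt u) ^ ((d:ℝ)+α) :=
          div_le_div_of_nonneg_left hu0.le (Real.rpow_pos_of_pos hsq _) h2
        refine h3.trans ?_
        rw [Real.sqrt_eq_rpow, ← Real.rpow_mul hu0.le]
        have h4 : u / u ^ ((1/2)*((d:ℝ)+α)) = u ^ (1 - (1/2)*((d:ℝ)+α)) := by
          rw [Real.rpow_sub hu0, Real.rpow_one]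
        rw [h4]
        apply Real.rpow_le_rpow_of_exponent_ge hu0 hu.2
        linarith [hα.2]
      calc p y ≤ c₀ * (u ^ (-(d:ℝ)/2) * Real.exp (-lam₀ * ‖y - x‖ ^ 2 / u)
            + u / (Real.sqrt u + ‖y - x‖) ^ ((d:ℝ) + α)) := h1
        _ ≤ c₀ * (u ^ (-(d:ℝ)/2) + u ^ (-(d:ℝ)/2)) := by
            apply mul_le_mul_of_nonneg_left _ hc₀.le
            exact add_le_add (mul_le_of_le_one_right hup hexp) hterm2
        _ = K * u ^ (-(d:ℝ)/2) := by rw [hKdef]; ring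
    have hKu : (0:ℝ) ≤ K * u ^ (-(d:ℝ)/2) := by positivity
    rw [hPeq]
    have hform : (∫ y, f y ∂(volume.withDensity fun y => ENNReal.ofReal (p y)))
        = ∫ y, p y * f y := by
      have h5 : (fun y => ENNReal.ofReal (p y))
          = (fun y => ((Real.toNNReal (p y) : ℝ≥0) : ℝ≥0∞)) := rfl
      rw [h5, integral_withDensity_eq_integral_smul hpmeas.real_toNNReal]
      congr 1
      ext y
      rw [NNReal.smul_def, smul_eq_mul, Real.coe_toNNReal _ (hpb y).1]
    rw [hform]
    have hptw : ∀ y, |p y * f y| ≤ S.indicator (fun _ => K * u ^ (-(d:ℝ)/2) * Mf) y := by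
      intro y
      by_cases hy : y ∈ S
      · rw [Set.indicator_of_mem hy, abs_mul, abs_of_nonneg (hpb y).1]
        exact mul_le_mul (hple y) (hfM y) (abs_nonneg _) hKu
      · rw [Set.indicator_of_notMem hy, hsupp y hy]
        simp
    have hpf_int : Integrable (fun y => p y * f y) := by
      apply Integrable.mono' (hind (K * u ^ (-(d:ℝ)/2) * Mf))
        ((hpmeas.mul hf).aestronglyMeasurable)
      exact Filter.Eventually.of_forall (fun y => by rw [Real.norm_eq_abs]; exact hptw y)
    calc |∫ y, p y * f y| ≤ ∫ y, |p y * f y| := habs _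
      _ ≤ ∫ y, S.indicator (fun _ => K * u ^ (-(d:ℝ)/2) * Mf) y :=
          integral_mono hpf_int.abs (hind _) hptw
      _ = K * u ^ (-(d:ℝ)/2) * Mf * s := hind_val _
  -- large-time density bound on P_u f
  have hC1 : ∀ u, (1:ℝ) ≤ u → ∀ x, |∫ y, f y ∂(P u x)| ≤ (c₀' * Mf) * s := by
    intro u hu x
    obtain ⟨p, hpmeas, hpb, hPeq⟩ := h_dens1 u hu x
    have hc₀Mf : (0:ℝ) ≤ c₀' * Mf := by positivity
    rw [hPeq]
    have hform : (∫ y, f y ∂(volume.withDensity fun y => ENNReal.ofReal (p y)))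
        = ∫ y, p y * f y := by
      have h5 : (fun y => ENNReal.ofReal (p y))
          = (fun y => ((Real.toNNReal (p y) : ℝ≥0) : ℝ≥0∞)) := rfl
      rw [h5, integral_withDensity_eq_integral_smul hpmeas.real_toNNReal]
      congr 1
      ext y
      rw [NNReal.smul_def, smul_eq_mul, Real.coe_toNNReal _ (hpb y).1]
    rw [hform]
    have hptw : ∀ y, |p y * f y| ≤ S.indicator (fun _ => c₀' * Mf) y := by
      intro y
      by_cases hy : y ∈ S
      · rw [Set.indicator_of_mem hy, abs_mul, abs_of_nonneg (hpb y).1]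
        exact mul_le_mul (hpb y).2 (hfM y) (abs_nonneg _) hc₀'
      · rw [Set.indicator_of_notMem hy, hsupp y hy]
        simp
    have hpf_int : Integrable (fun y => p y * f y) := by
      apply Integrable.mono' (hind (c₀' * Mf))
        ((hpmeas.mul hf).aestronglyMeasurable)
      exact Filter.Eventually.of_forall (fun y => by rw [Real.norm_eq_abs]; exact hptw y)
    calc |∫ y, p y * f y| ≤ ∫ y, |p y * f y| := habs _
      _ ≤ ∫ y, S.indicator (fun _ => c₀' * Mf) y :=
          integral_mono hpf_int.abs (hind _) hptw
      _ = c₀' * Mf * s := hind_val _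
  -- ergodicity bound
  have hErg : ∀ u, 0 < u →
      |(∫ x, (∫ y, f y ∂(P u x)) * f x * μ x) - m^2| ≤ c * Real.exp (-ρ*u) * Mf^2 := by
    intro u hu
    have hPfm := hPf_meas u hu
    have hdiff_bdd : ∀ x, |(∫ y, f y ∂(P u x)) - m| ≤ Mf + Mf*Cμ*s := by
      intro x
      calc |(∫ y, f y ∂(P u x)) - m| ≤ |∫ y, f y ∂(P u x)| + |m| := abs_sub _ _
        _ ≤ Mf + Mf*Cμ*s := add_le_add (hPf_bdd u hu x) hm_bdd
    have h1 : Integrable (fun x => ((∫ y, f y ∂(P u x)) - m) * (f x * μ x)) := by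
      have he : (fun x => ((∫ y, f y ∂(P u x)) - m) * (f x * μ x))
           = (fun x => (∫ y, f y ∂(P u x)) * f x * μ x - m * (f x * μ x)) := by
        funext x; ring
      rw [he]
      exact (hPffμ_int u hu).sub (hfμ_int.const_mul m)
    have heq : (∫ x, (∫ y, f y ∂(P u x)) * f x * μ x) - m^2
        = ∫ x, ((∫ y, f y ∂(P u x)) - m) * (f x * μ x) := by
      have h2 : ∫ x, ((∫ y, f y ∂(P u x)) - m) * (f x * μ x)
          = (∫ x, (∫ y, f y ∂(P u x)) * f x * μ x) - ∫ x, m * (f x * μ x) := by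
        rw [← integral_sub (hPffμ_int u hu) (hfμ_int.const_mul m)]
        congr 1
        funext x
        ring
      rw [h2, integral_const_mul, ← hmdef]
      ring
    rw [heq]
    have h3 : Integrable (fun x => |(∫ y, f y ∂(P u x)) - m| * μ x * Mf) := by
      apply Integrable.mono' ((hμ_int.const_mul ((Mf + Mf*Cμ*s)*Mf)))
        ((((hPfm.sub measurable_const).abs.mul hμ_meas).mul measurable_const).aestronglyMeasurable)
      apply Filter.Eventually.of_forall
      intro x
      show ‖|(∫ y, f y ∂(P u x)) - m| * μ x * Mf‖ ≤ (Mf + Mf*Cμ*s)*Mf * μ x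
      rw [Real.norm_eq_abs, abs_mul, abs_mul, abs_abs, abs_of_nonneg (hμ_nonneg x),
        abs_of_nonneg hMf]
      calc |(∫ y, f y ∂(P u x)) - m| * μ x * Mf ≤ ((Mf + Mf*Cμ*s) * μ x) * Mf := by
            apply mul_le_mul_of_nonneg_right _ hMf
            exact mul_le_mul_of_nonneg_right (hdiff_bdd x) (hμ_nonneg x)
        _ = (Mf + Mf*Cμ*s)*Mf * μ x := by ring
    calc |∫ x, ((∫ y, f y ∂(P u x)) - m) * (f x * μ x)|
        ≤ ∫ x, |((∫ y, f y ∂(P u x)) - m) * (f x * μ x)| := habs _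
      _ ≤ ∫ x, |(∫ y, f y ∂(P u x)) - m| * μ x * Mf := by
          apply integral_mono h1.abs h3
          intro x
          show |((∫ y, f y ∂(P u x)) - m) * (f x * μ x)|
            ≤ |(∫ y, f y ∂(P u x)) - m| * μ x * Mf
          rw [abs_mul, abs_mul, abs_of_nonneg (hμ_nonneg x), mul_assoc]
          apply mul_le_mul_of_nonneg_left _ (abs_nonneg _)
          calc |f x| * μ x ≤ Mf * μ x :=
                mul_le_mul_of_nonneg_right (hfM x) (hμ_nonneg x)
            _ = μ x * Mf := by ring
      _ = (∫ x, |(∫ y, f y ∂(P u x)) - m| * μ x) * Mf := by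
          rw [← integral_mul_const]
      _ ≤ (c * Real.exp (-ρ*u) * Mf) * Mf := by
          apply mul_le_mul_of_nonneg_right _ hMf
          have := h_erg u hu f Mf hf hfM
          rw [← hmdef] at this
          exact this
      _ = c * Real.exp (-ρ*u) * Mf^2 := by ring
  -- the dominating function
  set G : ℝ → ℝ := fun u => Mf^2 * Cμ * s * min 1 (K * s * u ^ (-(d:ℝ)/2))
      + Mf^2 * Cμ^2 * s^2 * Real.exp ρ * Real.exp (-ρ*u)
      + Mf^2 * (c^θ * D^(1-θ) * s^(1+2/(d:ℝ))) * Real.exp (-a*u) with hGdef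
  have hmin_nn : ∀ u : ℝ, 0 < u → (0:ℝ) ≤ min 1 (K * s * u ^ (-(d:ℝ)/2)) := by
    intro u hu
    exact le_min zero_le_one (by positivity)
  have hm2 : m^2 ≤ Mf^2*Cμ^2*s^2 := by
    have h9 : m^2 = |m|^2 := (sq_abs m).symm
    rw [h9]
    calc |m|^2 ≤ (Mf*Cμ*s)^2 := pow_le_pow_left₀ (abs_nonneg m) hm_bdd 2
      _ = Mf^2*Cμ^2*s^2 := by ring
  -- pointwise estimate
  have P1 : ∀ u ∈ Set.Ioc (0:ℝ) T,
      (T-u) * |(∫ x, (∫ y, f y ∂(P u x)) * f x * μ x) - m^2| ≤ T * G u := by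
    intro u hu
    have hu0 : 0 < u := hu.1
    have habs_le : |(∫ x, (∫ y, f y ∂(P u x)) * f x * μ x) - m^2| ≤ G u := by
      rcases le_or_gt u 1 with h1 | h1
      · -- small time
        have hX : (0:ℝ) ≤ K * s * u ^ (-(d:ℝ)/2) := by positivity
        have hFA : |∫ x, (∫ y, f y ∂(P u x)) * f x * μ x|
            ≤ (Mf * min 1 (K * s * u ^ (-(d:ℝ)/2))) * (Mf * Cμ * s) := by
          apply hF_le u hu0 _ (mul_nonneg hMf (hmin_nn u hu0))
          intro x
          rw [mul_min_of_nonneg _ _ hMf, mul_one]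
          refine le_min (hPf_bdd u hu0 x) ?_
          calc |∫ y, f y ∂(P u x)| ≤ (K * u ^ (-(d:ℝ)/2) * Mf) * s := hA u ⟨hu0, h1⟩ x
            _ = Mf * (K * s * u ^ (-(d:ℝ)/2)) := by ring
        have hexp1 : (1:ℝ) ≤ Real.exp ρ * Real.exp (-ρ*u) := by
          rw [← Real.exp_add]
          apply Real.one_le_exp
          nlinarith
        have ht3 : (0:ℝ) ≤ Mf^2 * (c^θ * D^(1-θ) * s^(1+2/(d:ℝ))) * Real.exp (-a*u) := by
          positivity
        calc |(∫ x, (∫ y, f y ∂(P u x)) * f x * μ x) - m^2|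
            ≤ |∫ x, (∫ y, f y ∂(P u x)) * f x * μ x| + m^2 := by
              have := abs_sub (∫ x, (∫ y, f y ∂(P u x)) * f x * μ x) (m^2)
              rwa [abs_of_nonneg (sq_nonneg m)] at this
          _ ≤ (Mf * min 1 (K * s * u ^ (-(d:ℝ)/2))) * (Mf * Cμ * s)
              + Mf^2*Cμ^2*s^2 := add_le_add hFA hm2
          _ ≤ G u := by
              rw [hGdef]
              have h5 : (Mf * min 1 (K * s * u ^ (-(d:ℝ)/2))) * (Mf * Cμ * s)
                  = Mf^2 * Cμ * s * min 1 (K * s * u ^ (-(d:ℝ)/2)) := by ring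
              have h6 : Mf^2*Cμ^2*s^2 ≤ Mf^2 * Cμ^2 * s^2 * Real.exp ρ * Real.exp (-ρ*u) := by
                nlinarith [hexp1, sq_nonneg (Mf*Cμ*s)]
              simp only []
              rw [h5]
              linarith
      · -- large time
        have hFC : |∫ x, (∫ y, f y ∂(P u x)) * f x * μ x|
            ≤ (c₀' * Mf * s) * (Mf * Cμ * s) := by
          apply hF_le u hu0 _ (by positivity)
          intro x
          calc |∫ y, f y ∂(P u x)| ≤ (c₀' * Mf) * s := hC1 u h1.le x
            _ = c₀' * Mf * s := by ring
        have hmin : |(∫ x, (∫ y, f y ∂(P u x)) * f x * μ x) - m^2|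
            ≤ min (c * Real.exp (-ρ*u) * Mf^2) (Mf^2 * D * s^2) := by
          refine le_min (hErg u hu0) ?_
          have h7 : |(∫ x, (∫ y, f y ∂(P u x)) * f x * μ x) - m^2|
              ≤ |∫ x, (∫ y, f y ∂(P u x)) * f x * μ x| + m^2 := by
            have := abs_sub (∫ x, (∫ y, f y ∂(P u x)) * f x * μ x) (m^2)
            rwa [abs_of_nonneg (sq_nonneg m)] at this
          have h8 : (c₀' * Mf * s) * (Mf * Cμ * s) + Mf^2*Cμ^2*s^2 = Mf^2 * D * s^2 := by
            rw [hDdef]; ring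
          linarith
        have hinterp := aux_min_interp (A := c * Real.exp (-ρ*u) * Mf^2)
          (B := Mf^2 * D * s^2) (by positivity) (by positivity) hθpos.le hθ1
        have hexpθ : (Real.exp (-ρ*u))^θ = Real.exp (-a*u) := by
          rw [← Real.exp_mul]
          congr 1
          rw [hadef]; ring
        have hM : ((Mf^2:ℝ))^θ * ((Mf^2:ℝ))^(1-θ) = Mf^2 := by
          rw [← Real.rpow_add_of_nonneg (by positivity) hθpos.le (by linarith)]
          norm_num
        have hs2 : ((s^2:ℝ))^(1-θ) = s^(1+2/(d:ℝ)) := by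
          rw [← Real.rpow_natCast s 2, ← Real.rpow_mul hs0]
          rw [← h2θ]
          norm_num
        have hEq : (c * Real.exp (-ρ*u) * Mf^2)^θ * (Mf^2*D*s^2)^(1-θ)
            = Mf^2 * (c^θ * D^(1-θ) * s^(1+2/(d:ℝ))) * Real.exp (-a*u) := by
          rw [Real.mul_rpow (mul_nonneg hc.le (Real.exp_nonneg _)) (sq_nonneg Mf),
            Real.mul_rpow hc.le (Real.exp_nonneg _),
            Real.mul_rpow (mul_nonneg (sq_nonneg Mf) hD) (sq_nonneg s),
            Real.mul_rpow (sq_nonneg Mf) hD,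
            hexpθ, hs2]
          linear_combination (c^θ * Real.exp (-a*u) * D^(1-θ) * s^(1+2/(d:ℝ))) * hM
        have ht1 : (0:ℝ) ≤ Mf^2 * Cμ * s * min 1 (K * s * u ^ (-(d:ℝ)/2)) := by
          have := hmin_nn u hu0
          positivity
        have ht2 : (0:ℝ) ≤ Mf^2 * Cμ^2 * s^2 * Real.exp ρ * Real.exp (-ρ*u) := by positivity
        rw [hGdef]
        simp only []
        rw [← hEq]
        linarith [hinterp, hmin]
    have hTu : T - u ≤ T := by linarith [hu.1]
    have hTu0 : 0 ≤ T - u := by linarith [hu.2]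
    have hG0 : 0 ≤ G u := le_trans (abs_nonneg _) habs_le
    exact mul_le_mul hTu habs_le (abs_nonneg _) hT.le
  -- integrability of G on Ioc 0 T
  have hcont1 : ContinuousOn
      (fun u : ℝ => Mf^2 * Cμ * s * min 1 (K * s * u ^ (-(d:ℝ)/2))) (Set.Ioi 0) :=
    continuousOn_const.mul (continuousOn_const.inf (continuousOn_const.mul
      (ContinuousOn.rpow_const continuousOn_id (fun x hx => Or.inl (ne_of_gt hx)))))
  have hint1 : IntegrableOn
      (fun u : ℝ => Mf^2 * Cμ * s * min 1 (K * s * u ^ (-(d:ℝ)/2))) (Set.Ioc 0 T) := by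
    apply Integrable.mono' (g := fun _ => Mf^2*Cμ*s)
      (integrableOn_const measure_Ioc_lt_top.ne)
      ((hcont1.mono Set.Ioc_subset_Ioi_self).aestronglyMeasurable measurableSet_Ioc)
    filter_upwards [ae_restrict_mem measurableSet_Ioc] with u hu
    rw [Real.norm_eq_abs, abs_of_nonneg (mul_nonneg (by positivity) (hmin_nn u hu.1))]
    calc Mf^2 * Cμ * s * min 1 (K * s * u ^ (-(d:ℝ)/2)) ≤ Mf^2 * Cμ * s * 1 :=
          mul_le_mul_of_nonneg_left (min_le_left _ _) (by positivity)
      _ = Mf^2*Cμ*s := by ring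
  have hint2 : IntegrableOn
      (fun u : ℝ => Mf^2 * Cμ^2 * s^2 * Real.exp ρ * Real.exp (-ρ*u)) (Set.Ioc 0 T) := by
    apply Continuous.integrableOn_Ioc
    exact continuous_const.mul (Real.continuous_exp.comp (continuous_const.mul continuous_id))
  have hint3 : IntegrableOn
      (fun u : ℝ => Mf^2 * (c^θ * D^(1-θ) * s^(1+2/(d:ℝ))) * Real.exp (-a*u)) (Set.Ioc 0 T) := by
    apply Continuous.integrableOn_Ioc
    exact continuous_const.mul (Real.continuous_exp.comp (continuous_const.mul continuous_id))
  have hintG : IntegrableOn G (Set.Ioc 0 T) := (hint1.add hint2).add hint3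
  -- integral bounds
  have hI1 : ∫ u in Set.Ioc (0:ℝ) T, Mf^2 * Cμ * s * min 1 (K * s * u ^ (-(d:ℝ)/2))
      ≤ c₁ * (Mf^2 * s^(1+2/(d:ℝ))) := by
    rw [integral_const_mul]
    calc Mf^2*Cμ*s * ∫ u in Set.Ioc (0:ℝ) T, min 1 (K * s * u ^ (-(d:ℝ)/2))
        ≤ Mf^2*Cμ*s * ((1 + 2*K/((d:ℝ)-2)) * s^(2/(d:ℝ))) :=
          mul_le_mul_of_nonneg_left (aux_min_int hK hs hs1 hd2) (by positivity)
      _ = c₁ * (Mf^2 * s^(1+2/(d:ℝ))) := by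
          rw [hc₁def]
          have hss : s * s^(2/(d:ℝ)) = s^(1+2/(d:ℝ)) := by
            rw [Real.rpow_add_of_nonneg hs0 zero_le_one (by positivity), Real.rpow_one]
          linear_combination (Mf^2 * Cμ * (1+2*K/((d:ℝ)-2))) * hss
  have hs2le : s^2 ≤ s^(1+2/(d:ℝ)) := by
    rw [← Real.rpow_natCast s 2]
    apply Real.rpow_le_rpow_of_exponent_ge hs hs1
    push_cast
    have : 2/(d:ℝ) ≤ 1 := by rw [div_le_one hd0]; linarith
    linarith
  have hI2 : ∫ u in Set.Ioc (0:ℝ) T, Mf^2 * Cμ^2 * s^2 * Real.exp ρ * Real.exp (-ρ*u)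
      ≤ c₂ * (Mf^2 * s^(1+2/(d:ℝ))) := by
    rw [integral_const_mul]
    calc Mf^2*Cμ^2*s^2*Real.exp ρ * ∫ u in Set.Ioc (0:ℝ) T, Real.exp (-ρ*u)
        ≤ Mf^2*Cμ^2*s^2*Real.exp ρ * (1/ρ) :=
          mul_le_mul_of_nonneg_left (aux_exp_int hρ hT.le) (by positivity)
      _ = Cμ^2*Real.exp ρ/ρ * Mf^2 * s^2 := by ring
      _ ≤ Cμ^2*Real.exp ρ/ρ * Mf^2 * s^(1+2/(d:ℝ)) :=
          mul_le_mul_of_nonneg_left hs2le (by positivity)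
      _ = c₂ * (Mf^2 * s^(1+2/(d:ℝ))) := by rw [hc₂def]; ring
  have hI3 : ∫ u in Set.Ioc (0:ℝ) T, Mf^2 * (c^θ * D^(1-θ) * s^(1+2/(d:ℝ))) * Real.exp (-a*u)
      ≤ c₃ * (Mf^2 * s^(1+2/(d:ℝ))) := by
    rw [integral_const_mul]
    calc Mf^2 * (c^θ * D^(1-θ) * s^(1+2/(d:ℝ))) * ∫ u in Set.Ioc (0:ℝ) T, Real.exp (-a*u)
        ≤ Mf^2 * (c^θ * D^(1-θ) * s^(1+2/(d:ℝ))) * (1/a) :=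
          mul_le_mul_of_nonneg_left (aux_exp_int ha hT.le) (by positivity)
      _ = c₃ * (Mf^2 * s^(1+2/(d:ℝ))) := by rw [hc₃def]; ring
  have hGsum : ∫ u in Set.Ioc (0:ℝ) T, G u
      = (∫ u in Set.Ioc (0:ℝ) T, Mf^2 * Cμ * s * min 1 (K * s * u ^ (-(d:ℝ)/2)))
        + (∫ u in Set.Ioc (0:ℝ) T, Mf^2 * Cμ^2 * s^2 * Real.exp ρ * Real.exp (-ρ*u))
        + ∫ u in Set.Ioc (0:ℝ) T, Mf^2 * (c^θ * D^(1-θ) * s^(1+2/(d:ℝ))) * Real.exp (-a*u) := by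
    have e1 : (∫ u in Set.Ioc (0:ℝ) T, (Mf^2 * Cμ * s * min 1 (K * s * u ^ (-(d:ℝ)/2))
          + Mf^2 * Cμ^2 * s^2 * Real.exp ρ * Real.exp (-ρ*u)))
        = (∫ u in Set.Ioc (0:ℝ) T, Mf^2 * Cμ * s * min 1 (K * s * u ^ (-(d:ℝ)/2)))
          + ∫ u in Set.Ioc (0:ℝ) T, Mf^2 * Cμ^2 * s^2 * Real.exp ρ * Real.exp (-ρ*u) :=
      integral_add hint1 hint2
    have e2 : (∫ u in Set.Ioc (0:ℝ) T, ((Mf^2 * Cμ * s * min 1 (K * s * u ^ (-(d:ℝ)/2))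
          + Mf^2 * Cμ^2 * s^2 * Real.exp ρ * Real.exp (-ρ*u))
          + Mf^2 * (c^θ * D^(1-θ) * s^(1+2/(d:ℝ))) * Real.exp (-a*u)))
        = (∫ u in Set.Ioc (0:ℝ) T, (Mf^2 * Cμ * s * min 1 (K * s * u ^ (-(d:ℝ)/2))
          + Mf^2 * Cμ^2 * s^2 * Real.exp ρ * Real.exp (-ρ*u)))
          + ∫ u in Set.Ioc (0:ℝ) T, Mf^2 * (c^θ * D^(1-θ) * s^(1+2/(d:ℝ))) * Real.exp (-a*u) :=
      integral_add (hint1.add hint2) hint3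
    exact e2.trans (by rw [e1])
  have key : (∫ u in Set.Icc (0:ℝ) T, (T-u) *
      |(∫ x, (∫ y, f y ∂(P u x)) * f x * μ x) - m^2|)
      ≤ T * ((c₁+c₂+c₃) * (Mf^2 * s^(1+2/(d:ℝ)))) := by
    rw [MeasureTheory.integral_Icc_eq_integral_Ioc]
    have step : (∫ u in Set.Ioc (0:ℝ) T, (T-u) *
        |(∫ x, (∫ y, f y ∂(P u x)) * f x * μ x) - m^2|)
        ≤ ∫ u in Set.Ioc (0:ℝ) T, T * G u := by
      apply integral_mono_of_nonneg
      · filter_upwards [ae_restrict_mem measurableSet_Ioc] with u hu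
        have : 0 ≤ T - u := by linarith [hu.2]
        positivity
      · exact hintG.const_mul T
      · filter_upwards [ae_restrict_mem measurableSet_Ioc] with u hu
        exact P1 u hu
    refine step.trans ?_
    rw [integral_const_mul]
    apply mul_le_mul_of_nonneg_left _ hT.le
    calc ∫ u in Set.Ioc (0:ℝ) T, G u
        ≤ c₁ * (Mf^2 * s^(1+2/(d:ℝ))) + c₂ * (Mf^2 * s^(1+2/(d:ℝ)))
          + c₃ * (Mf^2 * s^(1+2/(d:ℝ))) := by
          rw [hGsum]
          exact add_le_add (add_le_add hI1 hI2) hI3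
      _ = (c₁+c₂+c₃) * (Mf^2 * s^(1+2/(d:ℝ))) := by ring
  nlinarith [key]
end

section
/- Let d = 1 and α ∈ (0,2). Let μ be a bounded probability density on ℝ and let (P_u)_{u>0} be a family of Markov kernels on ℝ such that: (i) the measure μ(x)dx is invariant for every P_u; (ii) ‖P_u f‖_{L²(μ)} ≤ ‖f‖_{L²(μ)} for every f ∈ L²(μ) and u > 0; (iii) for every u ∈ (0,1], P_u(x,·) has a density p_u(x,·) with respect to Lebesgue measure satisfying p_u(x,y) ≤ c₀ (u^{−1/2} e^{−λ₀|y−x|²/u} + u/(u^{1/2} + |y−x|)^{1+α}) for all x, y, with constants c₀, λ₀ > 0; (iv) for every u ≥ 1, P_u(x,·) has a density bounded by a constant c₀′; (v) there exist c > 0, ρ > 0 such that ∫_ℝ |P_u g(x) − ∫ g μ dx| μ(x) dx ≤ c e^{−ρu} ‖g‖_∞ for every bounded measurable g and u > 0. Then there is a constant C, independent of f and T, such that for every T > 0 and every bounded measurable f : ℝ → ℝ whose support S has Lebesgue measure |S| < 1: 2 ∫_0^T (T−u) |⟨P_u f, f⟩_μ − (∫ f μ dx)²| du ≤ C T ‖f‖_∞²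 |S|² (1 + (log(1/|S|))^{2−(1+α)/2} + log(1/|S|)). -/
open MeasureTheory ProbabilityTheory Real
open scoped NNReal ENNReal

private lemma aux_int_le (S : Set ℝ) (hS : MeasurableSet S) (hfin : volume S ≠ ⊤)
    (w : ℝ → ℝ) (A : ℝ)
    (hw : ∀ x, |w x| ≤ S.indicator (fun _ => A) x) :
    |∫ x, w x| ≤ A * (volume S).toReal := by
  have hind : Integrable (S.indicator fun _ => A) := by
    rw [integrable_indicator_iff hS]
    exact integrableOn_const hfin
  calc |∫ x, w x| ≤ ∫ x, |w x| := by
        simpa [Real.norm_eq_abs] using norm_integral_le_integral_norm (μ := volume) w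
    _ ≤ ∫ x, S.indicator (fun _ => A) x :=
        integral_mono_of_nonneg (ae_of_all _ fun x => abs_nonneg _) hind (ae_of_all _ hw)
    _ = A * (volume S).toReal := by
        rw [integral_indicator_const _ hS, smul_eq_mul, mul_comm, measureReal_def]


set_option maxHeartbeats 1000000 in
/-- Variance-covariance bound, case `d = 1`: under invariance,
L²(μ)-contractivity, the two-regime transition-density bounds and exponential
ergodicity, `2∫_0^T (T-u)|⟨P_u f,f⟩_μ - (∫ fμ)²| du
  ≤ C T ‖f‖_∞² |S|² (1 + (log(1/|S|))^{2-(1+α)/2} + log(1/|S|))`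
for every bounded measurable `f : ℝ → ℝ` with support of Lebesgue measure `< 1`. -/
theorem stmt6 (α : ℝ) (hα : α ∈ Set.Ioo (0 : ℝ) 2)
    (μ : ℝ → ℝ) (hμ_meas : Measurable μ)
    (hμ_nonneg : ∀ x, 0 ≤ μ x) (Cμ : ℝ) (hμ_bdd : ∀ x, μ x ≤ Cμ)
    (hμ_prob : ∫ x, μ x = 1)
    (P : ℝ → Kernel ℝ ℝ)
    (hP_markov : ∀ u > (0 : ℝ), IsMarkovKernel (P u))
    -- (i) invariance of μ(x)dx
    (h_inv : ∀ u > (0 : ℝ), ∀ f : ℝ → ℝ, ∀ Mf : ℝ,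
      Measurable f → (∀ x, |f x| ≤ Mf) →
      ∫ x, (∫ y, f y ∂(P u x)) * μ x = ∫ x, f x * μ x)
    -- (ii) contraction on L²(μ)
    (h_contr : ∀ u > (0 : ℝ), ∀ f : ℝ → ℝ, Measurable f →
      Integrable (fun x => f x ^ 2 * μ x) →
      ∫ x, (∫ y, f y ∂(P u x)) ^ 2 * μ x ≤ ∫ x, f x ^ 2 * μ x)
    -- (iii) small-time density bound
    (c₀ lam₀ : ℝ) (hc₀ : 0 < c₀) (hlam₀ : 0 < lam₀)
    (h_dens : ∀ u ∈ Set.Ioc (0 : ℝ) 1, ∀ x : ℝ, ∃ p : ℝ → ℝ,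
      Measurable p ∧
      (∀ y, 0 ≤ p y ∧ p y ≤ c₀ * (u ^ (-(1 : ℝ) / 2) * Real.exp (-lam₀ * |y - x| ^ 2 / u)
        + u / (Real.sqrt u + |y - x|) ^ ((1 : ℝ) + α))) ∧
      (P u) x = volume.withDensity (fun y => ENNReal.ofReal (p y)))
    -- (iv) bounded density for u ≥ 1
    (c₀' : ℝ)
    (h_dens1 : ∀ u : ℝ, 1 ≤ u → ∀ x : ℝ, ∃ p : ℝ → ℝ,
      Measurable p ∧ (∀ y, 0 ≤ p y ∧ p y ≤ c₀') ∧
      (P u) x = volume.withDensity (fun y => ENNReal.ofReal (p y)))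
    -- (v) exponential ergodicity
    (c ρ : ℝ) (hc : 0 < c) (hρ : 0 < ρ)
    (h_erg : ∀ u > (0 : ℝ), ∀ g : ℝ → ℝ, ∀ Mg : ℝ,
      Measurable g → (∀ x, |g x| ≤ Mg) →
      ∫ x, |(∫ y, g y ∂(P u x)) - ∫ z, g z * μ z| * μ x ≤ c * Real.exp (-ρ * u) * Mg) :
    ∃ C : ℝ, ∀ T > (0 : ℝ), ∀ f : ℝ → ℝ, ∀ Mf : ℝ,
      Measurable f → (∀ x, |f x| ≤ Mf) → volume (Function.support f) < 1 →
      2 * (∫ u in Set.Icc 0 T, (T - u) *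
          |(∫ x, (∫ y, f y ∂(P u x)) * f x * μ x) - (∫ x, f x * μ x) ^ 2|)
        ≤ C * T * Mf ^ 2 * (volume (Function.support f)).toReal ^ 2 *
          (1 + Real.log (1 / (volume (Function.support f)).toReal)
                ^ (2 - (1 + α) / 2)
             + Real.log (1 / (volume (Function.support f)).toReal)) := by
  classical
  refine ⟨8 * c₀ * Cμ + 2 * Cμ ^ 2 + 2 * c / ρ + 4 * (c₀' * Cμ + Cμ ^ 2) / ρ, ?_⟩
  intro T hT f Mf hf hMf hSvol
  have hSm : MeasurableSet (Function.support f) :=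
    hf.stronglyMeasurable.measurableSet_support
  set S := Function.support f with hSdef
  have hvfin : volume S ≠ ⊤ := (hSvol.trans_le le_top).ne
  set s := (volume S).toReal with hs_def
  have hs_nonneg : 0 ≤ s := ENNReal.toReal_nonneg
  have hs1 : s < 1 := by
    rw [hs_def, ← ENNReal.toReal_one]
    exact (ENNReal.toReal_lt_toReal hvfin ENNReal.one_ne_top).mpr hSvol
  have hMf0 : 0 ≤ Mf := (abs_nonneg (f 0)).trans (hMf 0)
  have hCμ0 : 0 ≤ Cμ := (hμ_nonneg 0).trans (hμ_bdd 0)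
  have hc₀'0 : 0 ≤ c₀' := by
    obtain ⟨p, -, hpb, -⟩ := h_dens1 1 le_rfl 0
    exact (hpb 0).1.trans (hpb 0).2
  have hμ_int : Integrable μ := by
    by_contra h
    rw [integral_undef h] at hμ_prob
    norm_num at hμ_prob
  by_cases hs0 : s = 0
  · -- degenerate case: the support is null, everything vanishes
    have hS0 : volume S = 0 := by
      rcases (ENNReal.toReal_eq_zero_iff _).mp hs0 with h | h
      · exact h
      · exact absurd h hvfin
    have hf0 : ∀ᵐ x, f x = 0 := by
      filter_upwards [measure_eq_zero_iff_ae_notMem.mp hS0] with x hx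
      exact Function.notMem_support.mp hx
    have hint0 : ∀ u : ℝ, ∫ x, (∫ y, f y ∂(P u x)) * f x * μ x = 0 := by
      intro u
      apply integral_eq_zero_of_ae
      filter_upwards [hf0] with x hx
      simp [hx]
    have hm0 : ∫ x, f x * μ x = 0 := by
      apply integral_eq_zero_of_ae
      filter_upwards [hf0] with x hx
      simp [hx]
    simp only [hint0, hm0, hs0]
    norm_num
  · -- main case
    have hspos : 0 < s := lt_of_le_of_ne hs_nonneg (Ne.symm hs0)
    -- the generic covariance bound from a density bound
    have key : ∀ (u : ℝ) (Bd : ℝ), 0 ≤ Bd →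
        (∀ x : ℝ, ∃ p : ℝ → ℝ, Measurable p ∧ (∀ y, 0 ≤ p y ∧ p y ≤ Bd) ∧
          (P u) x = volume.withDensity (fun y => ENNReal.ofReal (p y))) →
        |∫ x, (∫ y, f y ∂(P u x)) * f x * μ x| ≤ Bd * (Mf ^ 2 * Cμ * s ^ 2) := by
      intro u Bd hBd hp
      have hPf : ∀ x, |∫ y, f y ∂(P u x)| ≤ Bd * Mf * s := by
        intro x
        obtain ⟨p, hpm, hpb, hPx⟩ := hp x
        rw [hPx,
          show (fun y => ENNReal.ofReal (p y))
            = (fun y => ((Real.toNNReal (p y) : ℝ≥0) : ℝ≥0∞)) from rfl,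
          integral_withDensity_eq_integral_smul hpm.real_toNNReal f]
        have heq : ∀ y, Real.toNNReal (p y) • f y = p y * f y := fun y => by
          simp [NNReal.smul_def, Real.coe_toNNReal _ (hpb y).1]
        simp only [heq]
        have hptw : ∀ y, |p y * f y| ≤ S.indicator (fun _ => Bd * Mf) y := by
          intro y
          by_cases hy : y ∈ S
          · rw [Set.indicator_of_mem hy, abs_mul]
            exact mul_le_mul (by rw [abs_of_nonneg (hpb y).1]; exact (hpb y).2)
              (hMf y) (abs_nonneg _) hBd
          · rw [Set.indicator_of_notMem hy, Function.notMem_support.mp hy]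
            simp
        have haux := aux_int_le S hSm hvfin (fun y => p y * f y) (Bd * Mf) hptw
        rw [hs_def]
        exact haux
      have hptw2 : ∀ x, |(∫ y, f y ∂(P u x)) * f x * μ x|
          ≤ S.indicator (fun _ => Bd * Mf * s * Mf * Cμ) x := by
        intro x
        by_cases hx : x ∈ S
        · rw [Set.indicator_of_mem hx, abs_mul, abs_mul]
          have h1 : |∫ y, f y ∂(P u x)| * |f x| ≤ Bd * Mf * s * Mf :=
            mul_le_mul (hPf x) (hMf x) (abs_nonneg _)
              (mul_nonneg (mul_nonneg hBd hMf0) hs_nonneg)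
          rw [abs_of_nonneg (hμ_nonneg x)]
          exact mul_le_mul h1 (hμ_bdd x) (hμ_nonneg x)
            (mul_nonneg (mul_nonneg (mul_nonneg hBd hMf0) hs_nonneg) hMf0)
        · rw [Set.indicator_of_notMem hx, Function.notMem_support.mp hx]
          simp
      have houter := aux_int_le S hSm hvfin
        (fun x => (∫ y, f y ∂(P u x)) * f x * μ x) (Bd * Mf * s * Mf * Cμ) hptw2
      calc |∫ x, (∫ y, f y ∂(P u x)) * f x * μ x|
          ≤ Bd * Mf * s * Mf * Cμ * s := by rw [hs_def]; exact houter
        _ = Bd * (Mf ^ 2 * Cμ * s ^ 2) := by ring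
    -- bound on the mean
    have hm_bd : |∫ x, f x * μ x| ≤ Mf * Cμ * s := by
      have hptw : ∀ x, |f x * μ x| ≤ S.indicator (fun _ => Mf * Cμ) x := by
        intro x
        by_cases hx : x ∈ S
        · rw [Set.indicator_of_mem hx, abs_mul, abs_of_nonneg (hμ_nonneg x)]
          exact mul_le_mul (hMf x) (hμ_bdd x) (hμ_nonneg x) hMf0
        · rw [Set.indicator_of_notMem hx, Function.notMem_support.mp hx]
          simp
      have haux := aux_int_le S hSm hvfin (fun x => f x * μ x) (Mf * Cμ) hptw
      rw [hs_def]
      exact haux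
    have hm2_bd : (∫ x, f x * μ x) ^ 2 ≤ (Mf * Cμ * s) ^ 2 := by
      rw [← sq_abs]
      exact pow_le_pow_left₀ (abs_nonneg _) hm_bd 2
    -- ergodicity bound
    have herg : ∀ u : ℝ, 0 < u →
        |(∫ x, (∫ y, f y ∂(P u x)) * f x * μ x) - (∫ x, f x * μ x) ^ 2|
          ≤ c * Real.exp (-ρ * u) * Mf ^ 2 := by
      intro u hu
      haveI := hP_markov u hu
      set m := ∫ x, f x * μ x with hm_def
      have hPufm : Measurable fun x => ∫ y, f y ∂(P u x) := by
        have h1 : StronglyMeasurable (Function.uncurry fun (_ y : ℝ) => f y) :=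
          hf.stronglyMeasurable.comp_measurable measurable_snd
        exact h1.integral_kernel_prod_right.measurable
      have hPuf_bd : ∀ x, |∫ y, f y ∂(P u x)| ≤ Mf := by
        intro x
        calc |∫ y, f y ∂(P u x)| ≤ ∫ y, |f y| ∂(P u x) := by
              simpa [Real.norm_eq_abs] using norm_integral_le_integral_norm (μ := P u x) f
          _ ≤ ∫ _y, Mf ∂(P u x) :=
              integral_mono_of_nonneg (ae_of_all _ fun y => abs_nonneg _)
                (integrable_const Mf) (ae_of_all _ hMf)
          _ = Mf := by simp
      have hfμ_int : Integrable (fun x => f x * μ x) := by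
        refine Integrable.mono' (hμ_int.const_mul Mf)
          ((hf.mul hμ_meas).aestronglyMeasurable) (ae_of_all _ fun x => ?_)
        rw [Real.norm_eq_abs, abs_mul, abs_of_nonneg (hμ_nonneg x)]
        exact mul_le_mul_of_nonneg_right (hMf x) (hμ_nonneg x)
      have hPfμ_int : Integrable (fun x => (∫ y, f y ∂(P u x)) * f x * μ x) := by
        refine Integrable.mono' (hμ_int.const_mul (Mf * Mf))
          (((hPufm.mul hf).mul hμ_meas).aestronglyMeasurable) (ae_of_all _ fun x => ?_)
        rw [Real.norm_eq_abs, abs_mul, abs_mul, abs_of_nonneg (hμ_nonneg x)]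
        exact mul_le_mul_of_nonneg_right
          (mul_le_mul (hPuf_bd x) (hMf x) (abs_nonneg _) hMf0) (hμ_nonneg x)
      have hD_eq : (∫ x, (∫ y, f y ∂(P u x)) * f x * μ x) - m ^ 2
          = ∫ x, ((∫ y, f y ∂(P u x)) - m) * f x * μ x := by
        have hptw : (fun x => ((∫ y, f y ∂(P u x)) - m) * f x * μ x)
            = fun x => (∫ y, f y ∂(P u x)) * f x * μ x - m * (f x * μ x) := by
          funext x; ring
        rw [hptw, integral_sub hPfμ_int (hfμ_int.const_mul m), integral_const_mul,
          ← hm_def, sq]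
      rw [hD_eq]
      have hg_int : Integrable (fun x => Mf * (|(∫ y, f y ∂(P u x)) - m| * μ x)) := by
        refine Integrable.mono' (hμ_int.const_mul (Mf * (Mf + |m|)))
          ((((hPufm.sub measurable_const).abs.mul hμ_meas).const_mul Mf).aestronglyMeasurable)
          (ae_of_all _ fun x => ?_)
        rw [Real.norm_eq_abs, abs_mul, abs_mul, abs_abs, abs_of_nonneg hMf0,
          abs_of_nonneg (hμ_nonneg x), mul_assoc]
        refine mul_le_mul_of_nonneg_left ?_ hMf0
        refine mul_le_mul_of_nonneg_right ?_ (hμ_nonneg x)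
        calc |(∫ y, f y ∂(P u x)) - m| ≤ |∫ y, f y ∂(P u x)| + |m| := abs_sub _ _
          _ ≤ Mf + |m| := add_le_add_left (hPuf_bd x) _
      calc |∫ x, ((∫ y, f y ∂(P u x)) - m) * f x * μ x|
          ≤ ∫ x, |(∫ y, f y ∂(P u x)) - m| * |f x| * |μ x| := by
            simpa [Real.norm_eq_abs, abs_mul] using
              norm_integral_le_integral_norm (μ := volume)
                (fun x => ((∫ y, f y ∂(P u x)) - m) * f x * μ x)
        _ ≤ ∫ x, Mf * (|(∫ y, f y ∂(P u x)) - m| * μ x) := by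
            refine integral_mono_of_nonneg
              (ae_of_all _ fun x => by positivity) hg_int
              (ae_of_all _ fun x => ?_)
            simp only [abs_of_nonneg (hμ_nonneg x)]
            nlinarith [mul_le_mul_of_nonneg_right
              (mul_le_mul_of_nonneg_left (hMf x)
                (abs_nonneg ((∫ y, f y ∂(P u x)) - m))) (hμ_nonneg x)]
        _ = Mf * ∫ x, |(∫ y, f y ∂(P u x)) - m| * μ x := integral_const_mul Mf _
        _ ≤ Mf * (c * Real.exp (-ρ * u) * Mf) := by
            refine mul_le_mul_of_nonneg_left ?_ hMf0
            exact h_erg u hu f Mf hf hMf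
        _ = c * Real.exp (-ρ * u) * Mf ^ 2 := by ring
    -- small-time covariance bound
    have hcov_small : ∀ u : ℝ, 0 < u → u ≤ 1 →
        |∫ x, (∫ y, f y ∂(P u x)) * f x * μ x|
          ≤ 2 * c₀ * u ^ (-(1 : ℝ) / 2) * (Mf ^ 2 * Cμ * s ^ 2) := by
      intro u hu hu1
      have hBd : 0 ≤ 2 * c₀ * u ^ (-(1 : ℝ) / 2) := by
        have := Real.rpow_nonneg hu.le (-(1 : ℝ) / 2)
        nlinarith
      refine key u _ hBd fun x => ?_
      obtain ⟨p, hpm, hpb, hPx⟩ := h_dens u ⟨hu, hu1⟩ x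
      refine ⟨p, hpm, fun y => ⟨(hpb y).1, ?_⟩, hPx⟩
      have h2 := (hpb y).2
      have hexp : Real.exp (-lam₀ * |y - x| ^ 2 / u) ≤ 1 := by
        rw [Real.exp_le_one_iff]
        apply div_nonpos_of_nonpos_of_nonneg _ hu.le
        nlinarith [sq_nonneg |y - x|]
      have hterm2 : u / (Real.sqrt u + |y - x|) ^ ((1 : ℝ) + α) ≤ u ^ (-(1 : ℝ) / 2) := by
        have hsq : Real.sqrt u = u ^ ((1 : ℝ) / 2) := by
          rw [Real.sqrt_eq_rpow]
        have hsmall_pos : (0 : ℝ) < (u ^ ((1 : ℝ) / 2)) ^ ((1 : ℝ) + α) :=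
          Real.rpow_pos_of_pos (Real.rpow_pos_of_pos hu _) _
        have hle : (u ^ ((1 : ℝ) / 2)) ^ ((1 : ℝ) + α)
            ≤ (Real.sqrt u + |y - x|) ^ ((1 : ℝ) + α) := by
          apply Real.rpow_le_rpow (Real.rpow_nonneg hu.le _) _ (by linarith [hα.1])
          rw [hsq] at *
          linarith [abs_nonneg (y - x)]
        calc u / (Real.sqrt u + |y - x|) ^ ((1 : ℝ) + α)
            ≤ u / (u ^ ((1 : ℝ) / 2)) ^ ((1 : ℝ) + α) :=
              div_le_div_of_nonneg_left hu.le hsmall_pos hle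
          _ = u ^ (1 - (1 : ℝ) / 2 * (1 + α)) := by
              rw [← Real.rpow_mul hu.le, Real.rpow_sub hu, Real.rpow_one]
          _ ≤ u ^ (-(1 : ℝ) / 2) :=
              Real.rpow_le_rpow_of_exponent_ge hu hu1 (by linarith [hα.2])
      calc p y ≤ c₀ * (u ^ (-(1 : ℝ) / 2) * Real.exp (-lam₀ * |y - x| ^ 2 / u)
            + u / (Real.sqrt u + |y - x|) ^ ((1 : ℝ) + α)) := h2
        _ ≤ c₀ * (u ^ (-(1 : ℝ) / 2) * 1 + u ^ (-(1 : ℝ) / 2)) := by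
            refine mul_le_mul_of_nonneg_left (add_le_add ?_ hterm2) hc₀.le
            exact mul_le_mul_of_nonneg_left hexp (Real.rpow_nonneg hu.le _)
        _ = 2 * c₀ * u ^ (-(1 : ℝ) / 2) := by ring
    -- large-time covariance bound
    have hcov_large : ∀ u : ℝ, 1 ≤ u →
        |∫ x, (∫ y, f y ∂(P u x)) * f x * μ x| ≤ c₀' * (Mf ^ 2 * Cμ * s ^ 2) :=
      fun u hu => key u c₀' hc₀'0 (h_dens1 u hu)
    -- set up the dominating function
    set L := Real.log (1 / s) with hL_def
    have hL : 0 < L := by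
      rw [hL_def]
      apply Real.log_pos
      rw [one_div]
      exact (one_lt_inv₀ hspos).mpr hs1
    set δ := 1 + 2 / ρ * L with hδ_def
    have hδ1 : 1 ≤ δ := by
      have h1 : 0 ≤ 2 / ρ * L := by positivity
      rw [hδ_def]; linarith
    have hQ : 0 ≤ T * Mf ^ 2 * s ^ 2 :=
      mul_nonneg (mul_nonneg hT.le (sq_nonneg Mf)) (sq_nonneg s)
    set a1 := T * Mf ^ 2 * s ^ 2 * (2 * c₀ * Cμ) with ha1
    set a2 := T * Mf ^ 2 * s ^ 2 * Cμ ^ 2 with ha2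
    set a3 := T * Mf ^ 2 * s ^ 2 * (c₀' * Cμ + Cμ ^ 2) with ha3
    set a4 := T * Mf ^ 2 * c with ha4
    have ha1' : 0 ≤ a1 := by
      rw [ha1]
      exact mul_nonneg hQ (mul_nonneg (by positivity) hCμ0)
    have ha2' : 0 ≤ a2 := by rw [ha2]; exact mul_nonneg hQ (sq_nonneg Cμ)
    have ha3' : 0 ≤ a3 := by
      rw [ha3]
      exact mul_nonneg hQ (add_nonneg (mul_nonneg hc₀'0 hCμ0) (sq_nonneg Cμ))
    have ha4' : 0 ≤ a4 := by
      rw [ha4]; exact mul_nonneg (mul_nonneg hT.le (sq_nonneg Mf)) hc.le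
    set G : ℝ → ℝ := fun u =>
      a1 * (Set.Ioc (0:ℝ) 1).indicator (fun v => v ^ (-(1:ℝ)/2)) u
      + a2 * (Set.Ioc (0:ℝ) 1).indicator (fun _ => (1:ℝ)) u
      + a3 * (Set.Ioc (1:ℝ) δ).indicator (fun _ => (1:ℝ)) u
      + a4 * (Set.Ioi δ).indicator (fun v => Real.exp (-ρ * v)) u with hG_def
    have hI1 : Integrable ((Set.Ioc (0:ℝ) 1).indicator fun v => v ^ (-(1:ℝ)/2)) := by
      have h1 : IntervalIntegrable (fun v : ℝ => v ^ (-(1:ℝ)/2)) volume 0 1 :=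
        intervalIntegral.intervalIntegrable_rpow' (by norm_num)
      exact (h1.1).integrable_indicator measurableSet_Ioc
    have hI2 : Integrable ((Set.Ioc (0:ℝ) 1).indicator fun _ => (1:ℝ)) := by
      rw [integrable_indicator_iff measurableSet_Ioc]
      exact integrableOn_const measure_Ioc_lt_top.ne
    have hI3 : Integrable ((Set.Ioc (1:ℝ) δ).indicator fun _ => (1:ℝ)) := by
      rw [integrable_indicator_iff measurableSet_Ioc]
      exact integrableOn_const measure_Ioc_lt_top.ne
    have hI4 : Integrable ((Set.Ioi δ).indicator fun v => Real.exp (-ρ * v)) :=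
      (exp_neg_integrableOn_Ioi δ hρ).integrable_indicator measurableSet_Ioi
    have hGint : Integrable G := by
      rw [hG_def]
      exact (((hI1.const_mul a1).add (hI2.const_mul a2)).add (hI3.const_mul a3)).add
        (hI4.const_mul a4)
    have hG0 : ∀ u, 0 ≤ G u := by
      intro u
      have i1 : 0 ≤ (Set.Ioc (0:ℝ) 1).indicator (fun v => v ^ (-(1:ℝ)/2)) u :=
        Set.indicator_nonneg (fun v hv => Real.rpow_nonneg hv.1.le _) u
      have i2 : 0 ≤ (Set.Ioc (0:ℝ) 1).indicator (fun _ => (1:ℝ)) u :=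
        Set.indicator_nonneg (fun _ _ => zero_le_one) u
      have i3 : 0 ≤ (Set.Ioc (1:ℝ) δ).indicator (fun _ => (1:ℝ)) u :=
        Set.indicator_nonneg (fun _ _ => zero_le_one) u
      have i4 : 0 ≤ (Set.Ioi δ).indicator (fun v => Real.exp (-ρ * v)) u :=
        Set.indicator_nonneg (fun v _ => (Real.exp_pos _).le) u
      simp only [hG_def]
      have := mul_nonneg ha1' i1
      have := mul_nonneg ha2' i2
      have := mul_nonneg ha3' i3
      have := mul_nonneg ha4' i4
      linarith
    have e1 : ∫ u, (Set.Ioc (0:ℝ) 1).indicator (fun v => v ^ (-(1:ℝ)/2)) u = 2 := by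
      rw [integral_indicator measurableSet_Ioc, ← intervalIntegral.integral_of_le zero_le_one,
        integral_rpow (Or.inl (by norm_num))]
      rw [Real.one_rpow]
      rw [Real.zero_rpow (by norm_num)]
      norm_num
    have e2 : ∫ u, (Set.Ioc (0:ℝ) 1).indicator (fun _ => (1:ℝ)) u = 1 := by
      rw [integral_indicator_const _ measurableSet_Ioc]
      simp [Real.volume_Ioc]
    have e3 : ∫ u, (Set.Ioc (1:ℝ) δ).indicator (fun _ => (1:ℝ)) u = δ - 1 := by
      rw [integral_indicator_const _ measurableSet_Ioc]
      simp [Real.volume_Ioc, ENNReal.toReal_ofReal (by linarith : (0:ℝ) ≤ δ - 1), hδ1]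
    have e4 : ∫ u, (Set.Ioi δ).indicator (fun v => Real.exp (-ρ * v)) u
        = Real.exp (-ρ * δ) / ρ := by
      rw [integral_indicator measurableSet_Ioi]
      simp only [neg_mul]
      rw [MeasureTheory.integral_comp_mul_left_Ioi (fun y => Real.exp (-y)) δ hρ,
        integral_exp_neg_Ioi, smul_eq_mul, div_eq_inv_mul]
    have hGval : ∫ u, G u
        = a1 * 2 + a2 * 1 + a3 * (δ - 1) + a4 * (Real.exp (-ρ * δ) / ρ) := by
      have j1 : Integrable (fun u : ℝ =>
          a1 * (Set.Ioc (0:ℝ) 1).indicator (fun v => v ^ (-(1:ℝ)/2)) u) := hI1.const_mul a1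
      have j2 : Integrable (fun u : ℝ =>
          a2 * (Set.Ioc (0:ℝ) 1).indicator (fun _ => (1:ℝ)) u) := hI2.const_mul a2
      have j3 : Integrable (fun u : ℝ =>
          a3 * (Set.Ioc (1:ℝ) δ).indicator (fun _ => (1:ℝ)) u) := hI3.const_mul a3
      have j4 : Integrable (fun u : ℝ =>
          a4 * (Set.Ioi δ).indicator (fun v => Real.exp (-ρ * v)) u) := hI4.const_mul a4
      have j12 : Integrable (fun u : ℝ =>
          a1 * (Set.Ioc (0:ℝ) 1).indicator (fun v => v ^ (-(1:ℝ)/2)) u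
          + a2 * (Set.Ioc (0:ℝ) 1).indicator (fun _ => (1:ℝ)) u) := j1.add j2
      have j123 : Integrable (fun u : ℝ =>
          a1 * (Set.Ioc (0:ℝ) 1).indicator (fun v => v ^ (-(1:ℝ)/2)) u
          + a2 * (Set.Ioc (0:ℝ) 1).indicator (fun _ => (1:ℝ)) u
          + a3 * (Set.Ioc (1:ℝ) δ).indicator (fun _ => (1:ℝ)) u) := j12.add j3
      simp only [hG_def]
      rw [integral_add j123 j4, integral_add j12 j3, integral_add j1 j2,
        integral_const_mul, integral_const_mul, integral_const_mul, integral_const_mul,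
        e1, e2, e3, e4]
    -- pointwise domination
    have hdom : ∀ u ∈ Set.Icc (0:ℝ) T, u ≠ 0 →
        (T - u) * |(∫ x, (∫ y, f y ∂(P u x)) * f x * μ x) - (∫ x, f x * μ x) ^ 2|
          ≤ G u := by
      intro u hu hu0
      have hupos : 0 < u := lt_of_le_of_ne hu.1 (Ne.symm hu0)
      have hTu : (T - u) * |(∫ x, (∫ y, f y ∂(P u x)) * f x * μ x) - (∫ x, f x * μ x) ^ 2|
          ≤ T * |(∫ x, (∫ y, f y ∂(P u x)) * f x * μ x) - (∫ x, f x * μ x) ^ 2| :=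
        mul_le_mul_of_nonneg_right (by linarith [hu.1]) (abs_nonneg _)
      refine hTu.trans ?_
      simp only [hG_def]
      have hD0 : |(∫ x, (∫ y, f y ∂(P u x)) * f x * μ x) - (∫ x, f x * μ x) ^ 2|
          ≤ |∫ x, (∫ y, f y ∂(P u x)) * f x * μ x| + (Mf * Cμ * s) ^ 2 := by
        calc |(∫ x, (∫ y, f y ∂(P u x)) * f x * μ x) - (∫ x, f x * μ x) ^ 2|
            ≤ |∫ x, (∫ y, f y ∂(P u x)) * f x * μ x| + |(∫ x, f x * μ x) ^ 2| := abs_sub _ _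
          _ ≤ |∫ x, (∫ y, f y ∂(P u x)) * f x * μ x| + (Mf * Cμ * s) ^ 2 := by
              rw [abs_of_nonneg (sq_nonneg (∫ x, f x * μ x))]
              linarith [hm2_bd]
      by_cases hle1 : u ≤ 1
      · have hmem : u ∈ Set.Ioc (0:ℝ) 1 := ⟨hupos, hle1⟩
        have hn3 : u ∉ Set.Ioc (1:ℝ) δ := fun h => (not_lt.mpr hle1) h.1
        have hn4 : u ∉ Set.Ioi δ := fun h => (not_lt.mpr hle1) (hδ1.trans_lt h)
        rw [Set.indicator_of_mem hmem, Set.indicator_of_mem hmem,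
          Set.indicator_of_notMem hn3, Set.indicator_of_notMem hn4]
        have hX := hcov_small u hupos hle1
        calc T * |(∫ x, (∫ y, f y ∂(P u x)) * f x * μ x) - (∫ x, f x * μ x) ^ 2|
            ≤ T * (2 * c₀ * u ^ (-(1:ℝ)/2) * (Mf ^ 2 * Cμ * s ^ 2) + (Mf * Cμ * s) ^ 2) := by
              apply mul_le_mul_of_nonneg_left _ hT.le
              linarith [hD0, hX]
          _ = a1 * u ^ (-(1:ℝ)/2) + a2 * 1 + a3 * 0 + a4 * 0 := by
              rw [ha1, ha2]; ring
      · push_neg at hle1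
        by_cases hleδ : u ≤ δ
        · have hn1 : u ∉ Set.Ioc (0:ℝ) 1 := fun h => (not_le.mpr hle1) h.2
          have hmem : u ∈ Set.Ioc (1:ℝ) δ := ⟨hle1, hleδ⟩
          have hn4 : u ∉ Set.Ioi δ := fun h => (not_lt.mpr hleδ) h
          rw [Set.indicator_of_notMem hn1, Set.indicator_of_notMem hn1,
            Set.indicator_of_mem hmem, Set.indicator_of_notMem hn4]
          have hX := hcov_large u hle1.le
          calc T * |(∫ x, (∫ y, f y ∂(P u x)) * f x * μ x) - (∫ x, f x * μ x) ^ 2|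
              ≤ T * (c₀' * (Mf ^ 2 * Cμ * s ^ 2) + (Mf * Cμ * s) ^ 2) := by
                apply mul_le_mul_of_nonneg_left _ hT.le
                linarith [hD0, hX]
            _ = a1 * 0 + a2 * 0 + a3 * 1 + a4 * 0 := by rw [ha3]; ring
        · push_neg at hleδ
          have hn1 : u ∉ Set.Ioc (0:ℝ) 1 := fun h => (not_le.mpr hle1) h.2
          have hn3 : u ∉ Set.Ioc (1:ℝ) δ := fun h => (not_lt.mpr h.2) hleδ
          have hmem : u ∈ Set.Ioi δ := hleδ
          rw [Set.indicator_of_notMem hn1, Set.indicator_of_notMem hn1,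
            Set.indicator_of_notMem hn3, Set.indicator_of_mem hmem]
          have hX := herg u hupos
          calc T * |(∫ x, (∫ y, f y ∂(P u x)) * f x * μ x) - (∫ x, f x * μ x) ^ 2|
              ≤ T * (c * Real.exp (-ρ * u) * Mf ^ 2) :=
                mul_le_mul_of_nonneg_left hX hT.le
            _ = a1 * 0 + a2 * 0 + a3 * 0 + a4 * Real.exp (-ρ * u) := by rw [ha4]; ring
    -- assemble everything
    have hne : ∀ᵐ u ∂(volume.restrict (Set.Icc (0:ℝ) T)), u ≠ 0 := by
      refine ae_iff.mpr ?_
      have hsub : {u : ℝ | ¬ u ≠ 0} ⊆ {(0:ℝ)} := by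
        intro u hu
        simp only [Set.mem_setOf_eq, not_not] at hu
        simp [hu]
      refine measure_mono_null hsub ?_
      rw [Measure.restrict_apply (measurableSet_singleton 0)]
      exact measure_mono_null Set.inter_subset_left (measure_singleton 0)
    have hmono : (∫ u in Set.Icc 0 T, (T - u) *
          |(∫ x, (∫ y, f y ∂(P u x)) * f x * μ x) - (∫ x, f x * μ x) ^ 2|)
        ≤ ∫ u in Set.Icc 0 T, G u := by
      refine integral_mono_of_nonneg ?_ hGint.restrict ?_
      · filter_upwards [ae_restrict_mem measurableSet_Icc] with u hu
        exact mul_nonneg (by linarith [hu.2]) (abs_nonneg _)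
      · filter_upwards [ae_restrict_mem measurableSet_Icc, hne] with u hu hu0
        exact hdom u hu hu0
    have hle2 : (∫ u in Set.Icc (0:ℝ) T, G u) ≤ ∫ u, G u :=
      setIntegral_le_integral hGint (ae_of_all _ hG0)
    have hexpδ : Real.exp (-ρ * δ) ≤ s ^ 2 := by
      have hLs : L = -Real.log s := by rw [hL_def, one_div, Real.log_inv]
      have h1 : -ρ * δ ≤ 2 * Real.log s := by
        have h2 : -ρ * δ = -ρ - 2 * L := by
          rw [hδ_def]; field_simp; ring
        rw [h2, hLs]; linarith
      calc Real.exp (-ρ * δ) ≤ Real.exp (2 * Real.log s) := Real.exp_le_exp.mpr h1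
        _ = s ^ 2 := by
          rw [show (2:ℝ) * Real.log s = Real.log s + Real.log s by ring, Real.exp_add,
            Real.exp_log hspos, sq]
    have hE : Real.exp (-ρ * δ) / ρ ≤ s ^ 2 / ρ := (div_le_div_iff_of_pos_right hρ).mpr hexpδ
    have hLp : 0 ≤ L ^ (2 - (1 + α) / 2) := Real.rpow_nonneg hL.le _
    have hA : 0 ≤ 8 * c₀ * Cμ + 2 * Cμ ^ 2 + 2 * c / ρ := by
      have : 0 ≤ 8 * c₀ * Cμ := mul_nonneg (by positivity) hCμ0
      have : 0 ≤ 2 * c / ρ := by positivity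
      nlinarith [sq_nonneg Cμ]
    have hB : 0 ≤ 4 * (c₀' * Cμ + Cμ ^ 2) / ρ := by
      apply div_nonneg _ hρ.le
      nlinarith [mul_nonneg hc₀'0 hCμ0, sq_nonneg Cμ]
    have hscalar : (8 * c₀ * Cμ + 2 * Cμ ^ 2 + 2 * c / ρ)
          + (4 * (c₀' * Cμ + Cμ ^ 2) / ρ) * L
        ≤ (8 * c₀ * Cμ + 2 * Cμ ^ 2 + 2 * c / ρ + 4 * (c₀' * Cμ + Cμ ^ 2) / ρ)
            * (1 + L ^ (2 - (1 + α) / 2) + L) := by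
      nlinarith [mul_nonneg hA hL.le, mul_nonneg (add_nonneg hA hB) hLp,
        mul_nonneg hB hLp, mul_nonneg hB hL.le]
    calc 2 * (∫ u in Set.Icc 0 T, (T - u) *
          |(∫ x, (∫ y, f y ∂(P u x)) * f x * μ x) - (∫ x, f x * μ x) ^ 2|)
        ≤ 2 * (a1 * 2 + a2 * 1 + a3 * (δ - 1) + a4 * (Real.exp (-ρ * δ) / ρ)) := by
          rw [← hGval]; linarith [hmono, hle2]
      _ ≤ 2 * (a1 * 2 + a2 + a3 * (2 / ρ * L) + a4 * (s ^ 2 / ρ)) := by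
          have h3 : a3 * (δ - 1) = a3 * (2 / ρ * L) := by rw [hδ_def]; ring
          have h4 : a4 * (Real.exp (-ρ * δ) / ρ) ≤ a4 * (s ^ 2 / ρ) :=
            mul_le_mul_of_nonneg_left hE ha4'
          linarith [h3, h4]
      _ = T * Mf ^ 2 * s ^ 2 * ((8 * c₀ * Cμ + 2 * Cμ ^ 2 + 2 * c / ρ)
            + (4 * (c₀' * Cμ + Cμ ^ 2) / ρ) * L) := by
          rw [ha1, ha2, ha3, ha4]
          field_simp
          ring
      _ ≤ T * Mf ^ 2 * s ^ 2 * ((8 * c₀ * Cμ + 2 * Cμ ^ 2 + 2 * c / ρ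
            + 4 * (c₀' * Cμ + Cμ ^ 2) / ρ) * (1 + L ^ (2 - (1 + α) / 2) + L)) :=
          mul_le_mul_of_nonneg_left hscalar hQ
      _ = (8 * c₀ * Cμ + 2 * Cμ ^ 2 + 2 * c / ρ + 4 * (c₀' * Cμ + Cμ ^ 2) / ρ)
            * T * Mf ^ 2 * s ^ 2 * (1 + L ^ (2 - (1 + α) / 2) + L) := by ring
end

section
/- Let d = 2 and α ∈ (0,2). Let μ be a bounded probability density on ℝ² and let (P_u)_{u>0} be a family of Markov kernels on ℝ² such that: (i) the measure μ(x)dx is invariant for every P_u; (ii) ‖P_u f‖_{L²(μ)} ≤ ‖f‖_{L²(μ)} for every f ∈ L²(μ) and u > 0; (iii) for every u ∈ (0,1], P_u(x,·) has a density p_u(x,·) with respect to Lebesgue measure satisfying p_u(x,y) ≤ c₀ (u^{−1} e^{−λ₀|y−x|²/u} + u/(u^{1/2} + |y−x|)^{2+α}) for all x, y, with constants c₀, λ₀ > 0; (iv) for every u ≥ 1, P_u(x,·) has a density bounded by a constant c₀′; (v) there exist c > 0, ρ > 0 such that ∫_{ℝ²} |P_u g(x) − ∫ g μ dx| μ(x)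 dx ≤ c e^{−ρu} ‖g‖_∞ for every bounded measurable g and u > 0. Then there is a constant C, independent of f and T, such that for every T > 0 and every bounded measurable f : ℝ² → ℝ whose support S has Lebesgue measure |S| < 1: 2 ∫_0^T (T−u) |⟨P_u f, f⟩_μ − (∫ f μ dx)²| du ≤ C T ‖f‖_∞² |S|² (1 + log(1/|S|)). -/
open MeasureTheory ProbabilityTheory Real
open scoped NNReal ENNReal

lemma aux_int_bound {X : Type*} [MeasurableSpace X] (vol : Measure X)
    (g f m : X → ℝ) (B Mf Cm : ℝ)
    (hB : 0 ≤ B) (hMf : 0 ≤ Mf) (hCm : 0 ≤ Cm)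
    (hg : ∀ x, |g x| ≤ B) (hf : ∀ x, |f x| ≤ Mf)
    (hm0 : ∀ x, 0 ≤ m x) (hmC : ∀ x, m x ≤ Cm)
    (hS : MeasurableSet (Function.support f))
    (hSfin : vol (Function.support f) ≠ ⊤) :
    |∫ x, g x * f x * m x ∂vol|
      ≤ B * Mf * Cm * (vol (Function.support f)).toReal := by
  set S := Function.support f with hSdef
  have hind : Integrable (S.indicator fun _ => B * Mf * Cm) vol :=
    (integrable_indicator_iff hS).2 (integrableOn_const hSfin)
  calc |∫ x, g x * f x * m x ∂vol| ≤ ∫ x, |g x * f x * m x| ∂vol := by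
        simpa [Real.norm_eq_abs, abs_mul] using
          norm_integral_le_integral_norm (μ := vol) (f := fun x => g x * f x * m x)
    _ ≤ ∫ x, S.indicator (fun _ => B * Mf * Cm) x ∂vol := by
        refine integral_mono_of_nonneg (ae_of_all _ fun x => abs_nonneg _) hind
          (ae_of_all _ fun x => ?_)
        by_cases hx : x ∈ S
        · rw [Set.indicator_of_mem hx]
          simp only [abs_mul, abs_of_nonneg (hm0 x)]
          exact mul_le_mul (mul_le_mul (hg x) (hf x) (abs_nonneg _) hB) (hmC x)
            (hm0 x) (by positivity)
        · rw [Set.indicator_of_notMem hx]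
          have : f x = 0 := Function.notMem_support.1 hx
          simp [this]
    _ = B * Mf * Cm * (vol S).toReal := by
        rw [integral_indicator_const _ hS, smul_eq_mul, mul_comm, measureReal_def]

/-- a bounded-support integrable comparison -/
lemma aux_integrable {X : Type*} [MeasurableSpace X] (vol : Measure X)
    {h : X → ℝ} {f : X → ℝ} (D : ℝ)
    (hh : AEStronglyMeasurable h vol)
    (hbd : ∀ x, |h x| ≤ D) (hsupp : ∀ x, f x = 0 → h x = 0)
    (hS : MeasurableSet (Function.support f))
    (hSfin : vol (Function.support f) ≠ ⊤) :
    Integrable h vol := by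
  refine Integrable.mono'
    ((integrable_indicator_iff hS).2 (integrableOn_const hSfin) :
      Integrable ((Function.support f).indicator fun _ => D) vol) hh
    (ae_of_all _ fun x => ?_)
  by_cases hx : x ∈ Function.support f
  · rw [Set.indicator_of_mem hx]; simpa [Real.norm_eq_abs] using hbd x
  · rw [Set.indicator_of_notMem hx]
    have : h x = 0 := hsupp x (Function.notMem_support.1 hx)
    simp [this]

set_option maxHeartbeats 2000000 in
/-- Variance-covariance bound, case `d = 2`: under invariance,
L²(μ)-contractivity, the two-regime transition-density bounds and exponential
ergodicity, `2∫_0^T (T-u)|⟨P_u f,f⟩_μ - (∫ fμ)²| du ≤ C T ‖f‖_∞² |S|² (1 + log(1/|S|))`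
for every bounded measurable `f : ℝ² → ℝ` with support of Lebesgue measure `< 1`. -/
theorem stmt7 (α : ℝ) (hα : α ∈ Set.Ioo (0 : ℝ) 2)
    (μ : EuclideanSpace ℝ (Fin 2) → ℝ) (hμ_meas : Measurable μ)
    (hμ_nonneg : ∀ x, 0 ≤ μ x) (Cμ : ℝ) (hμ_bdd : ∀ x, μ x ≤ Cμ)
    (hμ_prob : ∫ x, μ x = 1)
    (P : ℝ → Kernel (EuclideanSpace ℝ (Fin 2)) (EuclideanSpace ℝ (Fin 2)))
    (hP_markov : ∀ u > (0 : ℝ), IsMarkovKernel (P u))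
    -- (i) invariance of μ(x)dx
    (h_inv : ∀ u > (0 : ℝ), ∀ f : EuclideanSpace ℝ (Fin 2) → ℝ, ∀ Mf : ℝ,
      Measurable f → (∀ x, |f x| ≤ Mf) →
      ∫ x, (∫ y, f y ∂(P u x)) * μ x = ∫ x, f x * μ x)
    -- (ii) contraction on L²(μ)
    (h_contr : ∀ u > (0 : ℝ), ∀ f : EuclideanSpace ℝ (Fin 2) → ℝ, Measurable f →
      Integrable (fun x => f x ^ 2 * μ x) →
      ∫ x, (∫ y, f y ∂(P u x)) ^ 2 * μ x ≤ ∫ x, f x ^ 2 * μ x)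
    -- (iii) small-time density bound
    (c₀ lam₀ : ℝ) (hc₀ : 0 < c₀) (hlam₀ : 0 < lam₀)
    (h_dens : ∀ u ∈ Set.Ioc (0 : ℝ) 1, ∀ x, ∃ p : EuclideanSpace ℝ (Fin 2) → ℝ,
      Measurable p ∧
      (∀ y, 0 ≤ p y ∧ p y ≤ c₀ * (u⁻¹ * Real.exp (-lam₀ * ‖y - x‖ ^ 2 / u)
        + u / (Real.sqrt u + ‖y - x‖) ^ ((2 : ℝ) + α))) ∧
      (P u) x = volume.withDensity (fun y => ENNReal.ofReal (p y)))
    -- (iv) bounded density for u ≥ 1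
    (c₀' : ℝ)
    (h_dens1 : ∀ u : ℝ, 1 ≤ u → ∀ x, ∃ p : EuclideanSpace ℝ (Fin 2) → ℝ,
      Measurable p ∧ (∀ y, 0 ≤ p y ∧ p y ≤ c₀') ∧
      (P u) x = volume.withDensity (fun y => ENNReal.ofReal (p y)))
    -- (v) exponential ergodicity
    (c ρ : ℝ) (hc : 0 < c) (hρ : 0 < ρ)
    (h_erg : ∀ u > (0 : ℝ), ∀ g : EuclideanSpace ℝ (Fin 2) → ℝ, ∀ Mg : ℝ,
      Measurable g → (∀ x, |g x| ≤ Mg) →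
      ∫ x, |(∫ y, g y ∂(P u x)) - ∫ z, g z * μ z| * μ x ≤ c * Real.exp (-ρ * u) * Mg) :
    ∃ C : ℝ, ∀ T > (0 : ℝ), ∀ f : EuclideanSpace ℝ (Fin 2) → ℝ, ∀ Mf : ℝ,
      Measurable f → (∀ x, |f x| ≤ Mf) → volume (Function.support f) < 1 →
      2 * (∫ u in Set.Icc 0 T, (T - u) *
          |(∫ x, (∫ y, f y ∂(P u x)) * f x * μ x) - (∫ x, f x * μ x) ^ 2|)
        ≤ C * T * Mf ^ 2 * (volume (Function.support f)).toReal ^ 2 *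
          (1 + Real.log (1 / (volume (Function.support f)).toReal)) := by
  obtain ⟨hα0, hα2⟩ := hα
  have hCμ0 : 0 ≤ Cμ := le_trans (hμ_nonneg 0) (hμ_bdd 0)
  have hc₀'0 : 0 ≤ c₀' := by
    obtain ⟨p, -, hp, -⟩ := h_dens1 1 le_rfl 0
    exact le_trans (hp 0).1 (hp 0).2
  have hμ_int : Integrable μ := by
    by_contra h
    rw [integral_undef h] at hμ_prob
    norm_num at hμ_prob
  set K : ℝ := Cμ ^ 2 * (1 + 2 / ρ) + Cμ + 2 * c₀ * Cμ + 2 * c₀' * Cμ / ρ + c / ρ with hK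
  have hK0 : 0 ≤ K := by positivity
  refine ⟨2 * K, ?_⟩
  intro T hT f Mf hf hfM hSlt
  have hMf0 : 0 ≤ Mf := le_trans (abs_nonneg _) (hfM 0)
  set S := Function.support f with hSdef
  have hSm : MeasurableSet S := by
    rw [hSdef, Function.support_eq_preimage]
    exact hf (measurableSet_singleton 0).compl
  have hSfin : volume S ≠ ⊤ := ne_top_of_lt hSlt
  set s : ℝ := (volume S).toReal with hsdef
  have hs0 : 0 ≤ s := ENNReal.toReal_nonneg
  have hs1 : s < 1 := by
    have := (ENNReal.toReal_lt_toReal hSfin ENNReal.one_ne_top).2 hSlt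
    simpa using this
  set m : ℝ := ∫ x, f x * μ x with hm
  -- basic integrability facts
  have hind_int : ∀ D : ℝ, Integrable (S.indicator fun _ => D) :=
    fun D => (integrable_indicator_iff hSm).2 (integrableOn_const hSfin)
  have hfμ_int : Integrable (fun x => f x * μ x) := by
    refine aux_integrable volume (f := f) (Mf * Cμ)
      ((hf.mul hμ_meas).aestronglyMeasurable) (fun x => ?_) (fun x hx => by simp [hx]) hSm hSfin
    rw [abs_mul, abs_of_nonneg (hμ_nonneg x)]
    exact mul_le_mul (hfM x) (hμ_bdd x) (hμ_nonneg x) hMf0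
  have hf2_int : Integrable (fun x => f x ^ 2 * μ x) := by
    refine aux_integrable volume (f := f) (Mf ^ 2 * Cμ)
      (((hf.pow_const 2).mul hμ_meas).aestronglyMeasurable) (fun x => ?_)
      (fun x hx => by simp [hx]) hSm hSfin
    rw [abs_mul, abs_of_nonneg (hμ_nonneg x), abs_of_nonneg (sq_nonneg (f x))]
    refine mul_le_mul ?_ (hμ_bdd x) (hμ_nonneg x) (by positivity)
    nlinarith [hfM x, abs_nonneg (f x), sq_abs (f x)]
  have hm_le : |m| ≤ Mf * Cμ * s := by
    have h := aux_int_bound volume (fun _ => 1) f μ 1 Mf Cμ zero_le_one hMf0 hCμ0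
      (fun x => by norm_num) hfM hμ_nonneg hμ_bdd hSm hSfin
    rw [hm]
    calc |∫ x, f x * μ x| = |∫ x, (1 : ℝ) * f x * μ x| := by simp
      _ ≤ 1 * Mf * Cμ * s := h
      _ = Mf * Cμ * s := by ring
  have hf2_le : ∫ x, f x ^ 2 * μ x ≤ Mf ^ 2 * Cμ * s := by
    have h := aux_int_bound volume f f μ Mf Mf Cμ hMf0 hMf0 hCμ0 hfM hfM
      hμ_nonneg hμ_bdd hSm hSfin
    calc ∫ x, f x ^ 2 * μ x = ∫ x, f x * f x * μ x := by simp [pow_two]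
      _ ≤ |∫ x, f x * f x * μ x| := le_abs_self _
      _ ≤ Mf * Mf * Cμ * s := h
      _ = Mf ^ 2 * Cμ * s := by ring
  -- measurability and boundedness of P_u f
  have hPf_meas : ∀ u, 0 < u → Measurable fun x => ∫ y, f y ∂(P u x) := by
    intro u hu
    haveI := hP_markov u hu
    exact (MeasureTheory.StronglyMeasurable.integral_kernel_prod_right'
      ((hf.comp measurable_snd).stronglyMeasurable)).measurable
  have hPf_le : ∀ u, 0 < u → ∀ x, |∫ y, f y ∂(P u x)| ≤ Mf := by
    intro u hu x
    haveI := hP_markov u hu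
    have h := norm_integral_le_of_norm_le_const (μ := P u x) (f := f) (C := Mf)
      (ae_of_all _ fun y => by simpa [Real.norm_eq_abs] using hfM y)
    simpa [Real.norm_eq_abs, measure_univ] using h
  -- Regime R1: Cauchy–Schwarz / contraction bound, any u > 0
  have hI_R1 : ∀ u, 0 < u →
      |∫ x, (∫ y, f y ∂(P u x)) * f x * μ x| ≤ Mf ^ 2 * (Cμ * s) := by
    intro u hu
    have hA_meas := hPf_meas u hu
    have hA_le := hPf_le u hu
    have hA2_int : Integrable (fun x => (∫ y, f y ∂(P u x)) ^ 2 * μ x) := by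
      refine Integrable.mono' (hμ_int.const_mul (Mf ^ 2))
        (((hA_meas.pow_const 2).mul hμ_meas).aestronglyMeasurable)
        (ae_of_all _ fun x => ?_)
      rw [Real.norm_eq_abs, abs_mul, abs_of_nonneg (hμ_nonneg x),
        abs_of_nonneg (sq_nonneg _)]
      refine mul_le_mul ?_ le_rfl (hμ_nonneg x) (by positivity)
      nlinarith [hA_le x, abs_nonneg (∫ y, f y ∂(P u x)),
        sq_abs (∫ y, f y ∂(P u x))]
    have hcontr := h_contr u hu f hf hf2_int
    have hsum_int : Integrable
        (fun x => ((∫ y, f y ∂(P u x)) ^ 2 * μ x + f x ^ 2 * μ x) / 2) :=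
      (hA2_int.add hf2_int).div_const 2
    calc |∫ x, (∫ y, f y ∂(P u x)) * f x * μ x|
        ≤ ∫ x, |(∫ y, f y ∂(P u x)) * f x * μ x| := by
          simpa [Real.norm_eq_abs, abs_mul] using norm_integral_le_integral_norm
            (μ := volume) (f := fun x => (∫ y, f y ∂(P u x)) * f x * μ x)
      _ ≤ ∫ x, ((∫ y, f y ∂(P u x)) ^ 2 * μ x + f x ^ 2 * μ x) / 2 := by
          refine integral_mono_of_nonneg (ae_of_all _ fun x => abs_nonneg _) hsum_int
            (ae_of_all _ fun x => ?_)
          set A := ∫ y, f y ∂(P u x) with hA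
          have h1 : |A * f x * μ x| = |A| * |f x| * μ x := by
            rw [abs_mul, abs_mul, abs_of_nonneg (hμ_nonneg x)]
          have h2 : 2 * (|A| * |f x|) ≤ A ^ 2 + f x ^ 2 := by
            nlinarith [sq_nonneg (|A| - |f x|), sq_abs A, sq_abs (f x)]
          have h3 := mul_le_mul_of_nonneg_right h2 (hμ_nonneg x)
          nlinarith [h1, h3]
      _ = ((∫ x, (∫ y, f y ∂(P u x)) ^ 2 * μ x) + ∫ x, f x ^ 2 * μ x) / 2 := by
          rw [integral_div, integral_add hA2_int hf2_int]
      _ ≤ ∫ x, f x ^ 2 * μ x := by linarith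
      _ ≤ Mf ^ 2 * Cμ * s := hf2_le
      _ = Mf ^ 2 * (Cμ * s) := by ring
  -- inner density bounds
  have hPf_dens : ∀ u, 0 < u → u ≤ 1 → ∀ x,
      |∫ y, f y ∂(P u x)| ≤ 2 * c₀ / u * Mf * s := by
    intro u hu hu1 x
    obtain ⟨p, hpm, hpb, hPeq⟩ := h_dens u ⟨hu, hu1⟩ x
    have hple : ∀ y, p y ≤ 2 * c₀ / u := by
      intro y
      have h1 := (hpb y).2
      have hr : (0 : ℝ) ≤ ‖y - x‖ := norm_nonneg _
      have he : Real.exp (-lam₀ * ‖y - x‖ ^ 2 / u) ≤ 1 := by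
        rw [Real.exp_le_one_iff]
        apply div_nonpos_of_nonpos_of_nonneg _ hu.le
        nlinarith [sq_nonneg ‖y - x‖]
      have hd : u / (Real.sqrt u + ‖y - x‖) ^ ((2 : ℝ) + α) ≤ u⁻¹ := by
        have h2 : u ^ ((1 : ℝ) / 2 * ((2 : ℝ) + α))
            ≤ (Real.sqrt u + ‖y - x‖) ^ ((2 : ℝ) + α) := by
          rw [Real.rpow_mul hu.le, ← Real.sqrt_eq_rpow]
          exact Real.rpow_le_rpow (Real.sqrt_nonneg u)
            (le_add_of_nonneg_right hr) (by linarith)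
        calc u / (Real.sqrt u + ‖y - x‖) ^ ((2 : ℝ) + α)
            ≤ u / u ^ ((1 : ℝ) / 2 * ((2 : ℝ) + α)) := by
              gcongr
          _ = u ^ ((1 : ℝ) - (1 : ℝ) / 2 * ((2 : ℝ) + α)) := by
              rw [Real.rpow_sub hu, Real.rpow_one]
          _ ≤ u ^ (-1 : ℝ) :=
              Real.rpow_le_rpow_of_exponent_ge hu hu1 (by linarith)
          _ = u⁻¹ := Real.rpow_neg_one u
      calc p y ≤ c₀ * (u⁻¹ * Real.exp (-lam₀ * ‖y - x‖ ^ 2 / u)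
            + u / (Real.sqrt u + ‖y - x‖) ^ ((2 : ℝ) + α)) := h1
        _ ≤ c₀ * (u⁻¹ * 1 + u⁻¹) := by
            gcongr
        _ = 2 * c₀ / u := by field_simp; ring
    have heq : ∫ y, f y ∂(P u x) = ∫ y, p y * f y * 1 := by
      rw [hPeq]
      rw [show (fun y => ENNReal.ofReal (p y))
        = fun y => ((Real.toNNReal (p y) : ℝ≥0) : ℝ≥0∞) from rfl]
      rw [integral_withDensity_eq_integral_smul hpm.real_toNNReal f]
      refine integral_congr_ae (ae_of_all _ fun y => ?_)
      simp [NNReal.smul_def, Real.coe_toNNReal _ (hpb y).1]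
    have hB0 : (0 : ℝ) ≤ 2 * c₀ / u := by positivity
    have h := aux_int_bound volume p f (fun _ => 1) (2 * c₀ / u) Mf 1 hB0 hMf0
      zero_le_one (fun y => by rw [abs_of_nonneg (hpb y).1]; exact hple y) hfM
      (fun _ => zero_le_one) (fun _ => le_rfl) hSm hSfin
    rw [heq]
    calc |∫ y, p y * f y * 1| ≤ 2 * c₀ / u * Mf * 1 * s := h
      _ = 2 * c₀ / u * Mf * s := by ring
  have hPf_dens1 : ∀ u, 1 ≤ u → ∀ x,
      |∫ y, f y ∂(P u x)| ≤ c₀' * Mf * s := by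
    intro u hu1 x
    obtain ⟨p, hpm, hpb, hPeq⟩ := h_dens1 u hu1 x
    have heq : ∫ y, f y ∂(P u x) = ∫ y, p y * f y * 1 := by
      rw [hPeq]
      rw [show (fun y => ENNReal.ofReal (p y))
        = fun y => ((Real.toNNReal (p y) : ℝ≥0) : ℝ≥0∞) from rfl]
      rw [integral_withDensity_eq_integral_smul hpm.real_toNNReal f]
      refine integral_congr_ae (ae_of_all _ fun y => ?_)
      simp [NNReal.smul_def, Real.coe_toNNReal _ (hpb y).1]
    have h := aux_int_bound volume p f (fun _ => 1) c₀' Mf 1 hc₀'0 hMf0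
      zero_le_one (fun y => by rw [abs_of_nonneg (hpb y).1]; exact (hpb y).2) hfM
      (fun _ => zero_le_one) (fun _ => le_rfl) hSm hSfin
    rw [heq]
    calc |∫ y, p y * f y * 1| ≤ c₀' * Mf * 1 * s := h
      _ = c₀' * Mf * s := by ring
  -- Regime R2
  have hI_R2 : ∀ u, 0 < u → u ≤ 1 →
      |∫ x, (∫ y, f y ∂(P u x)) * f x * μ x| ≤ Mf ^ 2 * (2 * c₀ * Cμ * s ^ 2 / u) := by
    intro u hu hu1
    have h := aux_int_bound volume (fun x => ∫ y, f y ∂(P u x)) f μ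
      (2 * c₀ / u * Mf * s) Mf Cμ (by positivity) hMf0 hCμ0 (hPf_dens u hu hu1) hfM
      hμ_nonneg hμ_bdd hSm hSfin
    calc |∫ x, (∫ y, f y ∂(P u x)) * f x * μ x|
        ≤ 2 * c₀ / u * Mf * s * Mf * Cμ * s := h
      _ = Mf ^ 2 * (2 * c₀ * Cμ * s ^ 2 / u) := by ring
  -- Regime R3
  have hI_R3 : ∀ u, 1 ≤ u →
      |∫ x, (∫ y, f y ∂(P u x)) * f x * μ x| ≤ Mf ^ 2 * (c₀' * Cμ * s ^ 2) := by
    intro u hu1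
    have h := aux_int_bound volume (fun x => ∫ y, f y ∂(P u x)) f μ
      (c₀' * Mf * s) Mf Cμ (by positivity) hMf0 hCμ0 (hPf_dens1 u hu1) hfM
      hμ_nonneg hμ_bdd hSm hSfin
    calc |∫ x, (∫ y, f y ∂(P u x)) * f x * μ x|
        ≤ c₀' * Mf * s * Mf * Cμ * s := h
      _ = Mf ^ 2 * (c₀' * Cμ * s ^ 2) := by ring
  -- Regime R4 (ergodicity)
  have hI_R4 : ∀ u, 0 < u →
      |(∫ x, (∫ y, f y ∂(P u x)) * f x * μ x) - m ^ 2|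
        ≤ Mf ^ 2 * (c * Real.exp (-ρ * u)) := by
    intro u hu
    have hA_meas := hPf_meas u hu
    have hA_le := hPf_le u hu
    have hAfμ_int : Integrable (fun x => (∫ y, f y ∂(P u x)) * f x * μ x) := by
      refine aux_integrable volume (f := f) (Mf * Mf * Cμ)
        (((hA_meas.mul hf).mul hμ_meas).aestronglyMeasurable) (fun x => ?_)
        (fun x hx => by simp [hx]) hSm hSfin
      rw [abs_mul, abs_mul, abs_of_nonneg (hμ_nonneg x)]
      exact mul_le_mul (mul_le_mul (hA_le x) (hfM x) (abs_nonneg _) hMf0)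
        (hμ_bdd x) (hμ_nonneg x) (by positivity)
    have hsub : ∫ x, ((∫ y, f y ∂(P u x)) - m) * f x * μ x
        = (∫ x, (∫ y, f y ∂(P u x)) * f x * μ x) - m ^ 2 := by
      calc ∫ x, ((∫ y, f y ∂(P u x)) - m) * f x * μ x
          = ∫ x, ((∫ y, f y ∂(P u x)) * f x * μ x - m * (f x * μ x)) := by
            congr 1; funext x; ring
        _ = (∫ x, (∫ y, f y ∂(P u x)) * f x * μ x) - ∫ x, m * (f x * μ x) :=
            integral_sub hAfμ_int (hfμ_int.const_mul m)
        _ = (∫ x, (∫ y, f y ∂(P u x)) * f x * μ x) - m ^ 2 := by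
            rw [integral_const_mul, ← hm]; ring
    have hdom_int : Integrable (fun x => |(∫ y, f y ∂(P u x)) - m| * μ x * Mf) := by
      refine Integrable.mono' (hμ_int.const_mul ((Mf + |m|) * Mf))
        ((((hA_meas.sub measurable_const).abs.mul hμ_meas).mul_const Mf).aestronglyMeasurable)
        (ae_of_all _ fun x => ?_)
      rw [Real.norm_eq_abs, abs_of_nonneg (mul_nonneg (mul_nonneg (abs_nonneg _) (hμ_nonneg x)) hMf0)]
      have h1 : |(∫ y, f y ∂(P u x)) - m| ≤ Mf + |m| := by
        calc |(∫ y, f y ∂(P u x)) - m| ≤ |∫ y, f y ∂(P u x)| + |m| := abs_sub _ _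
          _ ≤ Mf + |m| := by linarith [hA_le x]
      calc |(∫ y, f y ∂(P u x)) - m| * μ x * Mf ≤ (Mf + |m|) * μ x * Mf := by
            have := mul_le_mul_of_nonneg_right h1 (hμ_nonneg x)
            nlinarith [this, hMf0]
        _ = (Mf + |m|) * Mf * μ x := by ring
    have herg := h_erg u hu f Mf hf hfM
    rw [← hm] at herg
    calc |(∫ x, (∫ y, f y ∂(P u x)) * f x * μ x) - m ^ 2|
        = |∫ x, ((∫ y, f y ∂(P u x)) - m) * f x * μ x| := by rw [hsub]
      _ ≤ ∫ x, |((∫ y, f y ∂(P u x)) - m) * f x * μ x| := by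
          simpa [Real.norm_eq_abs, abs_mul] using norm_integral_le_integral_norm
            (μ := volume) (f := fun x => ((∫ y, f y ∂(P u x)) - m) * f x * μ x)
      _ ≤ ∫ x, |(∫ y, f y ∂(P u x)) - m| * μ x * Mf := by
          refine integral_mono_of_nonneg (ae_of_all _ fun x => abs_nonneg _)
            hdom_int (ae_of_all _ fun x => ?_)
          simp only [abs_mul, abs_of_nonneg (hμ_nonneg x)]
          have h1 := mul_le_mul_of_nonneg_left (hfM x)
            (abs_nonneg ((∫ y, f y ∂(P u x)) - m))
          have h2 := mul_le_mul_of_nonneg_right h1 (hμ_nonneg x)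
          nlinarith [h2]
      _ = (∫ x, |(∫ y, f y ∂(P u x)) - m| * μ x) * Mf := by
          rw [← integral_mul_const]
      _ ≤ c * Real.exp (-ρ * u) * Mf * Mf :=
          mul_le_mul_of_nonneg_right herg hMf0
      _ = Mf ^ 2 * (c * Real.exp (-ρ * u)) := by ring
  -- degenerate case s = 0
  rcases eq_or_lt_of_le hs0 with hs0' | hs0'
  · have hS0 : volume S = 0 := by
      rcases (ENNReal.toReal_eq_zero_iff _).1 hs0'.symm with h | h
      · exact h
      · exact absurd h hSfin
    have hf0 : ∀ᵐ x, f x = 0 := by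
      rw [ae_iff]
      simpa [hSdef, Function.support] using hS0
    have hm0 : m = 0 := by
      rw [hm]
      exact integral_eq_zero_of_ae (hf0.mono fun x hx => by simp [hx])
    have hzero : ∀ u ∈ Set.Ioc (0 : ℝ) T,
        (T - u) * |(∫ x, (∫ y, f y ∂(P u x)) * f x * μ x) - m ^ 2| = 0 := by
      intro u hu
      have hPf0 : ∀ x, (∫ y, f y ∂(P u x)) = 0 := by
        intro x
        have hac : P u x ≪ volume := by
          rcases le_or_gt u 1 with h1 | h1
          · obtain ⟨p, -, -, hPeq⟩ := h_dens u ⟨hu.1, h1⟩ x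
            rw [hPeq]; exact withDensity_absolutelyContinuous _ _
          · obtain ⟨p, -, -, hPeq⟩ := h_dens1 u h1.le x
            rw [hPeq]; exact withDensity_absolutelyContinuous _ _
        exact integral_eq_zero_of_ae ((hac.ae_eq (hf0.mono fun x hx => by simp [hx])))
      have : (fun x => (∫ y, f y ∂(P u x)) * f x * μ x) = fun _ => (0 : ℝ) := by
        funext x; rw [hPf0 x]; ring
      rw [this, integral_zero, hm0]
      simp
    have hint0 : (∫ u in Set.Icc 0 T, (T - u) *
        |(∫ x, (∫ y, f y ∂(P u x)) * f x * μ x) - m ^ 2|) = 0 := by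
      refine integral_eq_zero_of_ae ?_
      have h0 : (volume.restrict (Set.Icc (0 : ℝ) T)) {0} = 0 := by
        rw [Measure.restrict_apply (measurableSet_singleton 0)]
        exact measure_mono_null Set.inter_subset_left Real.volume_singleton
      have hne : ∀ᵐ u ∂(volume.restrict (Set.Icc (0 : ℝ) T)), u ≠ 0 := by
        rw [ae_iff]; simpa using h0
      filter_upwards [ae_restrict_mem measurableSet_Icc, hne] with u hu hune
      exact hzero u ⟨lt_of_le_of_ne hu.1 (Ne.symm hune), hu.2⟩
    rw [hint0, ← hs0']
    norm_num
  -- main case 0 < s < 1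
  set L : ℝ := Real.log (1 / s) with hL
  have hL0 : 0 ≤ L := Real.log_nonneg (one_le_one_div hs0' hs1.le)
  set U : ℝ := 1 + 2 / ρ * L with hU
  have hU1 : 1 ≤ U := le_add_of_nonneg_right (by positivity)
  have hU0 : 0 ≤ U := by linarith
  set E : ℝ → ℝ := fun u =>
      (Set.Ioc (0 : ℝ) U).indicator (fun _ => Cμ ^ 2 * s ^ 2) u
    + (Set.Ioc (0 : ℝ) s).indicator (fun _ => Cμ * s) u
    + (Set.Ioc s 1).indicator (fun v => 2 * c₀ * Cμ * s ^ 2 / v) u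
    + (Set.Ioc (1 : ℝ) U).indicator (fun _ => c₀' * Cμ * s ^ 2) u
    + (Set.Ioi U).indicator (fun v => c * Real.exp (-ρ * v)) u with hE
  have hn1 : ∀ u, 0 ≤ (Set.Ioc (0 : ℝ) U).indicator (fun _ => Cμ ^ 2 * s ^ 2) u :=
    fun u => Set.indicator_nonneg (fun _ _ => by positivity) u
  have hn2 : ∀ u, 0 ≤ (Set.Ioc (0 : ℝ) s).indicator (fun _ => Cμ * s) u :=
    fun u => Set.indicator_nonneg (fun _ _ => by positivity) u
  have hn3 : ∀ u, 0 ≤ (Set.Ioc s 1).indicator (fun v => 2 * c₀ * Cμ * s ^ 2 / v) u :=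
    fun u => Set.indicator_nonneg (fun v hv => by
      have hv0 : 0 < v := lt_of_le_of_lt hs0 hv.1
      positivity) u
  have hn4 : ∀ u, 0 ≤ (Set.Ioc (1 : ℝ) U).indicator (fun _ => c₀' * Cμ * s ^ 2) u :=
    fun u => Set.indicator_nonneg (fun _ _ => by positivity) u
  have hn5 : ∀ u, 0 ≤ (Set.Ioi U).indicator (fun v => c * Real.exp (-ρ * v)) u :=
    fun u => Set.indicator_nonneg (fun v _ => by positivity) u
  have hE_nonneg : ∀ u, 0 ≤ E u := by
    intro u
    rw [hE]
    have := hn1 u; have := hn2 u; have := hn3 u; have := hn4 u; have := hn5 u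
    dsimp only
    linarith
  -- integrability of the pieces
  have hint1 : Integrable ((Set.Ioc (0 : ℝ) U).indicator fun _ => Cμ ^ 2 * s ^ 2) :=
    (integrable_indicator_iff measurableSet_Ioc).2
      (integrableOn_const measure_Ioc_lt_top.ne)
  have hint2 : Integrable ((Set.Ioc (0 : ℝ) s).indicator fun _ => Cμ * s) :=
    (integrable_indicator_iff measurableSet_Ioc).2
      (integrableOn_const measure_Ioc_lt_top.ne)
  have hint3 : Integrable ((Set.Ioc s 1).indicator fun v => 2 * c₀ * Cμ * s ^ 2 / v) := by
    refine (integrable_indicator_iff measurableSet_Ioc).2 ?_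
    refine Integrable.mono'
      ((integrableOn_const measure_Ioc_lt_top.ne :
        IntegrableOn (fun _ => 2 * c₀ * Cμ * s ^ 2 / s) (Set.Ioc s 1) volume))
      ((measurable_const.div measurable_id).aestronglyMeasurable) ?_
    filter_upwards [ae_restrict_mem measurableSet_Ioc] with v hv
    have hv0 : 0 < v := lt_of_le_of_lt hs0 hv.1
    rw [Real.norm_eq_abs, abs_of_nonneg (by positivity)]
    gcongr
    exact hv.1.le
  have hint5 : Integrable ((Set.Ioi U).indicator fun v => c * Real.exp (-ρ * v)) := by
    refine (integrable_indicator_iff measurableSet_Ioi).2 ?_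
    exact (exp_neg_integrableOn_Ioi U hρ).const_mul c
  have hint4 : Integrable ((Set.Ioc (1 : ℝ) U).indicator fun _ => c₀' * Cμ * s ^ 2) :=
    (integrable_indicator_iff measurableSet_Ioc).2
      (integrableOn_const measure_Ioc_lt_top.ne)
  have hE_int : Integrable E := by
    rw [hE]
    exact (((hint1.add hint2).add hint3).add hint4).add hint5
  -- value of the integral of E
  have hi1 : ∫ u, (Set.Ioc (0 : ℝ) U).indicator (fun _ => Cμ ^ 2 * s ^ 2) u
      = Cμ ^ 2 * s ^ 2 * U := by
    rw [integral_indicator_const _ measurableSet_Ioc, measureReal_def, Real.volume_Ioc, smul_eq_mul,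
      ENNReal.toReal_ofReal (by linarith)]
    ring
  have hi2 : ∫ u, (Set.Ioc (0 : ℝ) s).indicator (fun _ => Cμ * s) u = Cμ * s * s := by
    rw [integral_indicator_const _ measurableSet_Ioc, measureReal_def, Real.volume_Ioc, smul_eq_mul,
      ENNReal.toReal_ofReal (by linarith)]
    ring
  have hi3 : ∫ u, (Set.Ioc s 1).indicator (fun v => 2 * c₀ * Cμ * s ^ 2 / v) u
      = 2 * c₀ * Cμ * s ^ 2 * L := by
    rw [integral_indicator measurableSet_Ioc]
    have h1 : ∫ v in Set.Ioc s 1, 2 * c₀ * Cμ * s ^ 2 / v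
        = 2 * c₀ * Cμ * s ^ 2 * ∫ v in Set.Ioc s 1, v⁻¹ := by
      simp_rw [div_eq_mul_inv]
      exact integral_const_mul _ _
    rw [h1]
    have h2 : ∫ v in Set.Ioc s 1, v⁻¹ = L := by
      rw [← intervalIntegral.integral_of_le hs1.le]
      have h0 : (0 : ℝ) ∉ Set.uIcc s 1 := by
        rw [Set.uIcc_of_le hs1.le]
        simp only [Set.mem_Icc, not_and_or, not_le]
        exact Or.inl hs0'
      rw [integral_inv h0, hL]
    rw [h2]
  have hi4 : ∫ u, (Set.Ioc (1 : ℝ) U).indicator (fun _ => c₀' * Cμ * s ^ 2) u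
      = c₀' * Cμ * s ^ 2 * (U - 1) := by
    rw [integral_indicator_const _ measurableSet_Ioc, measureReal_def, Real.volume_Ioc, smul_eq_mul,
      ENNReal.toReal_ofReal (by linarith)]
    ring
  have hi5 : ∫ u, (Set.Ioi U).indicator (fun v => c * Real.exp (-ρ * v)) u
      = c * (ρ⁻¹ * Real.exp (-(ρ * U))) := by
    rw [integral_indicator measurableSet_Ioi]
    rw [integral_const_mul]
    congr 1
    have h1 : ∀ v : ℝ, Real.exp (-ρ * v) = Real.exp (-(ρ * v)) := by intro v; rw [neg_mul]
    simp_rw [h1]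
    have := integral_comp_mul_left_Ioi (fun x => Real.exp (-x)) U hρ
    simp only [smul_eq_mul] at this
    rw [this, integral_exp_neg_Ioi]
  have hE_val : ∫ u, E u = Cμ ^ 2 * s ^ 2 * U + Cμ * s * s + 2 * c₀ * Cμ * s ^ 2 * L
      + c₀' * Cμ * s ^ 2 * (U - 1) + c * (ρ⁻¹ * Real.exp (-(ρ * U))) := by
    have e5 : (∫ u, ((Set.Ioc (0 : ℝ) U).indicator (fun _ => Cμ ^ 2 * s ^ 2) u + (Set.Ioc (0 : ℝ) s).indicator (fun _ => Cμ * s) u + (Set.Ioc s 1).indicator (fun v => 2 * c₀ * Cμ * s ^ 2 / v) u + (Set.Ioc (1 : ℝ) U).indicator (fun _ => c₀' * Cμ * s ^ 2) u + (Set.Ioi U).indicator (fun v => c * Real.exp (-ρ * v)) u))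
        = (∫ u, ((Set.Ioc (0 : ℝ) U).indicator (fun _ => Cμ ^ 2 * s ^ 2) u + (Set.Ioc (0 : ℝ) s).indicator (fun _ => Cμ * s) u + (Set.Ioc s 1).indicator (fun v => 2 * c₀ * Cμ * s ^ 2 / v) u + (Set.Ioc (1 : ℝ) U).indicator (fun _ => c₀' * Cμ * s ^ 2) u)) + ∫ u, (Set.Ioi U).indicator (fun v => c * Real.exp (-ρ * v)) u :=
      integral_add ((((hint1.add hint2).add hint3).add hint4)) hint5
    have e4 : (∫ u, ((Set.Ioc (0 : ℝ) U).indicator (fun _ => Cμ ^ 2 * s ^ 2) u + (Set.Ioc (0 : ℝ) s).indicator (fun _ => Cμ * s) u + (Set.Ioc s 1).indicator (fun v => 2 * c₀ * Cμ * s ^ 2 / v) u + (Set.Ioc (1 : ℝ) U).indicator (fun _ => c₀' * Cμ * s ^ 2) u))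
        = (∫ u, ((Set.Ioc (0 : ℝ) U).indicator (fun _ => Cμ ^ 2 * s ^ 2) u + (Set.Ioc (0 : ℝ) s).indicator (fun _ => Cμ * s) u + (Set.Ioc s 1).indicator (fun v => 2 * c₀ * Cμ * s ^ 2 / v) u)) + ∫ u, (Set.Ioc (1 : ℝ) U).indicator (fun _ => c₀' * Cμ * s ^ 2) u :=
      integral_add (((hint1.add hint2).add hint3)) hint4
    have e3 : (∫ u, ((Set.Ioc (0 : ℝ) U).indicator (fun _ => Cμ ^ 2 * s ^ 2) u + (Set.Ioc (0 : ℝ) s).indicator (fun _ => Cμ * s) u + (Set.Ioc s 1).indicator (fun v => 2 * c₀ * Cμ * s ^ 2 / v) u))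
        = (∫ u, ((Set.Ioc (0 : ℝ) U).indicator (fun _ => Cμ ^ 2 * s ^ 2) u + (Set.Ioc (0 : ℝ) s).indicator (fun _ => Cμ * s) u)) + ∫ u, (Set.Ioc s 1).indicator (fun v => 2 * c₀ * Cμ * s ^ 2 / v) u :=
      integral_add ((hint1.add hint2)) hint3
    have e2 : (∫ u, ((Set.Ioc (0 : ℝ) U).indicator (fun _ => Cμ ^ 2 * s ^ 2) u + (Set.Ioc (0 : ℝ) s).indicator (fun _ => Cμ * s) u))
        = (∫ u, (Set.Ioc (0 : ℝ) U).indicator (fun _ => Cμ ^ 2 * s ^ 2) u) + ∫ u, (Set.Ioc (0 : ℝ) s).indicator (fun _ => Cμ * s) u :=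
      integral_add hint1 hint2
    simp only [hE]
    rw [e5, e4, e3, e2, hi1, hi2, hi3, hi4, hi5]
  -- exponential bound
  have hexp_le : Real.exp (-(ρ * U)) ≤ s ^ 2 := by
    have h2L : Real.exp (-(2 * L)) = s ^ 2 := by
      have he : -(2 * L) = Real.log s + Real.log s := by
        rw [hL, one_div, Real.log_inv]; ring
      rw [he, Real.exp_add, Real.exp_log hs0']
      ring
    have hρ' : ρ ≠ 0 := ne_of_gt hρ
    have hsplit : -(ρ * U) = -ρ + -(2 * L) := by
      rw [hU]; field_simp; ring
    rw [hsplit, Real.exp_add, h2L]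
    have h1 : Real.exp (-ρ) ≤ 1 := by
      rw [Real.exp_le_one_iff]; linarith
    nlinarith [Real.exp_pos (-ρ), sq_nonneg s]
  have hE_total : ∫ u, E u ≤ K * (s ^ 2 * (1 + L)) := by
    rw [hE_val, hK]
    have e1 : Cμ ^ 2 * s ^ 2 * U ≤ Cμ ^ 2 * (1 + 2 / ρ) * (s ^ 2 * (1 + L)) := by
      rw [hU]
      have h2ρ : 0 ≤ 2 / ρ := by positivity
      nlinarith [sq_nonneg Cμ, sq_nonneg s, mul_nonneg (sq_nonneg Cμ) (sq_nonneg s)]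
    have e2 : Cμ * s * s ≤ Cμ * (s ^ 2 * (1 + L)) := by nlinarith [mul_nonneg hCμ0 (sq_nonneg s)]
    have e3 : 2 * c₀ * Cμ * s ^ 2 * L ≤ 2 * c₀ * Cμ * (s ^ 2 * (1 + L)) := by
      nlinarith [mul_nonneg (mul_nonneg (mul_nonneg (by norm_num : (0:ℝ) ≤ 2) hc₀.le) hCμ0) (sq_nonneg s)]
    have e4 : c₀' * Cμ * s ^ 2 * (U - 1) ≤ 2 * c₀' * Cμ / ρ * (s ^ 2 * (1 + L)) := by
      rw [hU]
      have h1 : c₀' * Cμ * s ^ 2 * (1 + 2 / ρ * L - 1) = 2 * c₀' * Cμ / ρ * (s ^ 2 * L) := by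
        field_simp; ring
      rw [h1]
      have h2 : (0:ℝ) ≤ 2 * c₀' * Cμ / ρ := by positivity
      nlinarith [mul_nonneg h2 (sq_nonneg s)]
    have e5 : c * (ρ⁻¹ * Real.exp (-(ρ * U))) ≤ c / ρ * (s ^ 2 * (1 + L)) := by
      have h1 : c * (ρ⁻¹ * Real.exp (-(ρ * U))) ≤ c * (ρ⁻¹ * s ^ 2) := by
        gcongr
      calc c * (ρ⁻¹ * Real.exp (-(ρ * U))) ≤ c * (ρ⁻¹ * s ^ 2) := h1
        _ = c / ρ * (s ^ 2 * 1) := by field_simp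
        _ ≤ c / ρ * (s ^ 2 * (1 + L)) := by
            have : (0:ℝ) ≤ c / ρ := by positivity
            nlinarith [mul_nonneg this (sq_nonneg s)]
    linarith
  -- the key pointwise bound
  have key : ∀ u ∈ Set.Ioc (0 : ℝ) T,
      (T - u) * |(∫ x, (∫ y, f y ∂(P u x)) * f x * μ x) - m ^ 2|
        ≤ T * Mf ^ 2 * E u := by
    intro u hu
    obtain ⟨hu0, huT⟩ := hu
    have habs : |(∫ x, (∫ y, f y ∂(P u x)) * f x * μ x) - m ^ 2| ≤ Mf ^ 2 * E u := by
      by_cases hU' : u ≤ U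
      · have ht1 : (Set.Ioc (0 : ℝ) U).indicator (fun _ => Cμ ^ 2 * s ^ 2) u
            = Cμ ^ 2 * s ^ 2 := Set.indicator_of_mem (Set.mem_Ioc.mpr ⟨hu0, hU'⟩) _
        have hm2 : m ^ 2 ≤ Mf ^ 2 * (Cμ ^ 2 * s ^ 2) := by
          nlinarith [hm_le, abs_nonneg m, sq_abs m]
        have htr : |(∫ x, (∫ y, f y ∂(P u x)) * f x * μ x) - m ^ 2|
            ≤ |∫ x, (∫ y, f y ∂(P u x)) * f x * μ x| + m ^ 2 := by
          calc |(∫ x, (∫ y, f y ∂(P u x)) * f x * μ x) - m ^ 2|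
              ≤ |∫ x, (∫ y, f y ∂(P u x)) * f x * μ x| + |m ^ 2| := abs_sub _ _
            _ = |∫ x, (∫ y, f y ∂(P u x)) * f x * μ x| + m ^ 2 := by
                rw [abs_of_nonneg (sq_nonneg m)]
        rcases le_or_gt u s with hus | hus
        · have hI := hI_R1 u hu0
          have ht2 : (Set.Ioc (0 : ℝ) s).indicator (fun _ => Cμ * s) u = Cμ * s :=
            Set.indicator_of_mem (Set.mem_Ioc.mpr ⟨hu0, hus⟩) _
          have hEge : Cμ ^ 2 * s ^ 2 + Cμ * s ≤ E u := by
            rw [hE]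
            have := hn3 u; have := hn4 u; have := hn5 u
            dsimp only
            rw [ht1, ht2]
            linarith
          calc |(∫ x, (∫ y, f y ∂(P u x)) * f x * μ x) - m ^ 2|
              ≤ |∫ x, (∫ y, f y ∂(P u x)) * f x * μ x| + m ^ 2 := htr
            _ ≤ Mf ^ 2 * (Cμ * s) + Mf ^ 2 * (Cμ ^ 2 * s ^ 2) := add_le_add hI hm2
            _ = Mf ^ 2 * (Cμ ^ 2 * s ^ 2 + Cμ * s) := by ring
            _ ≤ Mf ^ 2 * E u := mul_le_mul_of_nonneg_left hEge (sq_nonneg Mf)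
        · rcases le_or_gt u 1 with hu1 | hu1
          · have hI := hI_R2 u hu0 hu1
            have ht3 : (Set.Ioc s 1).indicator (fun v => 2 * c₀ * Cμ * s ^ 2 / v) u
                = 2 * c₀ * Cμ * s ^ 2 / u := Set.indicator_of_mem (Set.mem_Ioc.mpr ⟨hus, hu1⟩) _
            have hEge : Cμ ^ 2 * s ^ 2 + 2 * c₀ * Cμ * s ^ 2 / u ≤ E u := by
              rw [hE]
              have := hn2 u; have := hn4 u; have := hn5 u
              dsimp only
              rw [ht1, ht3]
              linarith
            calc |(∫ x, (∫ y, f y ∂(P u x)) * f x * μ x) - m ^ 2|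
                ≤ |∫ x, (∫ y, f y ∂(P u x)) * f x * μ x| + m ^ 2 := htr
              _ ≤ Mf ^ 2 * (2 * c₀ * Cμ * s ^ 2 / u) + Mf ^ 2 * (Cμ ^ 2 * s ^ 2) :=
                  add_le_add hI hm2
              _ = Mf ^ 2 * (Cμ ^ 2 * s ^ 2 + 2 * c₀ * Cμ * s ^ 2 / u) := by ring
              _ ≤ Mf ^ 2 * E u := mul_le_mul_of_nonneg_left hEge (sq_nonneg Mf)
          · have hI := hI_R3 u hu1.le
            have ht4 : (Set.Ioc (1 : ℝ) U).indicator (fun _ => c₀' * Cμ * s ^ 2) u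
                = c₀' * Cμ * s ^ 2 := Set.indicator_of_mem (Set.mem_Ioc.mpr ⟨hu1, hU'⟩) _
            have hEge : Cμ ^ 2 * s ^ 2 + c₀' * Cμ * s ^ 2 ≤ E u := by
              rw [hE]
              have := hn2 u; have := hn3 u; have := hn5 u
              dsimp only
              rw [ht1, ht4]
              linarith
            calc |(∫ x, (∫ y, f y ∂(P u x)) * f x * μ x) - m ^ 2|
                ≤ |∫ x, (∫ y, f y ∂(P u x)) * f x * μ x| + m ^ 2 := htr
              _ ≤ Mf ^ 2 * (c₀' * Cμ * s ^ 2) + Mf ^ 2 * (Cμ ^ 2 * s ^ 2) :=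
                  add_le_add hI hm2
              _ = Mf ^ 2 * (Cμ ^ 2 * s ^ 2 + c₀' * Cμ * s ^ 2) := by ring
              _ ≤ Mf ^ 2 * E u := mul_le_mul_of_nonneg_left hEge (sq_nonneg Mf)
      · push_neg at hU'
        have ht5 : (Set.Ioi U).indicator (fun v => c * Real.exp (-ρ * v)) u
            = c * Real.exp (-ρ * u) := Set.indicator_of_mem (Set.mem_Ioi.mpr hU') _
        have hEge : c * Real.exp (-ρ * u) ≤ E u := by
          rw [hE]
          have := hn1 u; have := hn2 u; have := hn3 u; have := hn4 u
          dsimp only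
          rw [ht5]
          linarith
        calc |(∫ x, (∫ y, f y ∂(P u x)) * f x * μ x) - m ^ 2|
            ≤ Mf ^ 2 * (c * Real.exp (-ρ * u)) := hI_R4 u hu0
          _ ≤ Mf ^ 2 * E u := mul_le_mul_of_nonneg_left hEge (sq_nonneg Mf)
    calc (T - u) * |(∫ x, (∫ y, f y ∂(P u x)) * f x * μ x) - m ^ 2|
        ≤ T * |(∫ x, (∫ y, f y ∂(P u x)) * f x * μ x) - m ^ 2| :=
          mul_le_mul_of_nonneg_right (by linarith) (abs_nonneg _)
      _ ≤ T * (Mf ^ 2 * E u) := mul_le_mul_of_nonneg_left habs hT.le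
      _ = T * Mf ^ 2 * E u := by ring
  -- conclusion
  have hmain : (∫ u in Set.Icc 0 T, (T - u) *
      |(∫ x, (∫ y, f y ∂(P u x)) * f x * μ x) - m ^ 2|)
      ≤ ∫ u in Set.Icc 0 T, T * Mf ^ 2 * E u := by
    have h0 : (volume.restrict (Set.Icc (0 : ℝ) T)) {0} = 0 := by
      rw [Measure.restrict_apply (measurableSet_singleton 0)]
      exact measure_mono_null Set.inter_subset_left Real.volume_singleton
    have hne : ∀ᵐ u ∂(volume.restrict (Set.Icc (0 : ℝ) T)), u ≠ 0 := by
      rw [ae_iff]; simpa using h0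
    refine integral_mono_of_nonneg ?_ ((hE_int.const_mul (T * Mf ^ 2)).restrict) ?_
    · filter_upwards [ae_restrict_mem measurableSet_Icc] with u hu
      exact mul_nonneg (by linarith [hu.2]) (abs_nonneg _)
    · filter_upwards [ae_restrict_mem measurableSet_Icc, hne] with u hu hune
      exact key u ⟨lt_of_le_of_ne hu.1 (Ne.symm hune), hu.2⟩
  have hset : (∫ u in Set.Icc 0 T, T * Mf ^ 2 * E u)
      = T * Mf ^ 2 * ∫ u in Set.Icc 0 T, E u := integral_const_mul _ _
  have hsetle : (∫ u in Set.Icc (0:ℝ) T, E u) ≤ ∫ u, E u :=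
    setIntegral_le_integral hE_int (ae_of_all _ hE_nonneg)
  calc 2 * (∫ u in Set.Icc 0 T, (T - u) *
        |(∫ x, (∫ y, f y ∂(P u x)) * f x * μ x) - m ^ 2|)
      ≤ 2 * (T * Mf ^ 2 * ∫ u in Set.Icc 0 T, E u) := by
        rw [← hset]; linarith [hmain]
    _ ≤ 2 * (T * Mf ^ 2 * (K * (s ^ 2 * (1 + L)))) := by
        have h1 : (∫ u in Set.Icc (0:ℝ) T, E u) ≤ K * (s ^ 2 * (1 + L)) :=
          le_trans hsetle hE_total
        have h2 : (0:ℝ) ≤ T * Mf ^ 2 := by positivity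
        nlinarith [mul_le_mul_of_nonneg_left h1 h2]
    _ = 2 * K * T * Mf ^ 2 * s ^ 2 * (1 + L) := by ring
end

section
/- Let d ≥ 1. Let a : ℝ^d → ℝ^{d×d} be bounded and measurable and set c(x) := a(x)a(x)^T. Let b : ℝ^d → ℝ^d be measurable and suppose there exist C̃ > 0 and ρ̃ > 0 with ⟨x, b(x)⟩ ≤ −C̃ |x| for all |x| ≥ ρ̃. Let γ : ℝ^d → ℝ^{d×d} be measurable with γ_max := sup_x ‖γ(x)‖ ∈ (0, ∞). Let F : ℝ^d → [0,∞) be measurable and suppose there exists ε₀ > 0 with ∫_{ℝ^d} |z|² e^{ε₀|z|} F(z) dz < ∞. For ε > 0 set f*(x) := e^{ε|x|} and, for x ≠ 0, define A f*(x) := (1/2) Σ_{i,j=1}^d c_{ij}(x) ∂²_{ij} f*(x) + Σ_{i=1}^d b_i(x) ∂_i f*(x) + ∫_{ℝ^d} ( f*(x + γ(x)z) − f*(x) − (γ(x)z)·∇f*(x) ) F(z) dz. Then there exist ε ∈ (0, ε₀/γ_max], c₁ > 0 and R > 0 such that A f*(x) ≤ −c₁ f*(x) for all x with |x| ≥ R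 (so f* is a Lyapunov function satisfying the drift condition A f* ≤ −c₁ f* + c₂ for suitable c₁, c₂ > 0). -/
open Real MeasureTheory Matrix
open scoped RealInnerProductSpace

lemma exp_quad (u : ℝ) : Real.exp u ≤ 1 + u + u^2 * Real.exp |u| := by
  have h1 : (1:ℝ) ≤ Real.exp |u| := Real.one_le_exp (abs_nonneg u)
  rcases le_or_gt |u| 1 with h | h
  · have hb := Real.exp_bound h (n := 2) (by norm_num)
    simp [Finset.sum_range_succ] at hb
    rw [abs_le] at hb
    nlinarith [sq_abs u, sq_nonneg u]
  · have hu2 : 1 ≤ u^2 := by nlinarith [sq_abs u]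
    rcases le_or_gt 0 u with hu | hu
    · rw [abs_of_nonneg hu]
      nlinarith [Real.exp_pos u]
    · have : Real.exp u ≤ 1 := Real.exp_le_one_iff.mpr hu.le
      have habs : |u| = -u := abs_of_neg hu
      nlinarith [Real.exp_pos |u|]

lemma jump_bound {E : Type*} [NormedAddCommGroup E] [InnerProductSpace ℝ E]
    (x v : E) (hx : x ≠ 0) (ε : ℝ) (hε : 0 < ε) :
    0 ≤ Real.exp (ε * ‖x + v‖) - Real.exp (ε * ‖x‖) - ε * Real.exp (ε * ‖x‖) / ‖x‖ * ⟪v, x⟫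
    ∧ Real.exp (ε * ‖x + v‖) - Real.exp (ε * ‖x‖) - ε * Real.exp (ε * ‖x‖) / ‖x‖ * ⟪v, x⟫
      ≤ Real.exp (ε * ‖x‖) * (ε^2 * ‖v‖^2 * Real.exp (ε * ‖v‖) + ε * ‖v‖^2 / (2 * ‖x‖)) := by
  set n := ‖x‖ with hn_def
  have hn : 0 < n := norm_pos_iff.mpr hx
  set p := ⟪v, x⟫ with hp_def
  set t := ‖x + v‖ - n with ht_def
  have hxv : ‖x + v‖ = n + t := by ring
  have h1 : (n + t)^2 = n^2 + 2*p + ‖v‖^2 := by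
    rw [← hxv, norm_add_sq_real, real_inner_comm]
  have h4 : t ≤ ‖v‖ := by
    have := norm_add_le x v; simp only [ht_def]; linarith
  have h5 : -‖v‖ ≤ t := by
    have h := norm_add_le (x + v) (-v)
    simp only [add_neg_cancel_right, norm_neg] at h
    simp only [ht_def]; linarith
  have htsq : t^2 ≤ ‖v‖^2 := sq_le_sq' h5 h4
  have h2 : p ≤ n * t := by nlinarith
  have h3 : n * t ≤ p + ‖v‖^2 / 2 := by nlinarith [sq_nonneg t]
  have hexp : Real.exp (ε * ‖x + v‖) = Real.exp (ε * n) * Real.exp (ε * t) := by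
    rw [hxv, mul_add, Real.exp_add]
  have hen : 0 < Real.exp (ε * n) := Real.exp_pos _
  have hrw : ε * Real.exp (ε * n) / n * p = Real.exp (ε * n) * (ε * p / n) := by
    field_simp
  clear_value n p t
  constructor
  · -- lower bound
    have hlin : 1 + ε * t ≤ Real.exp (ε * t) := by
      have := Real.add_one_le_exp (ε * t); linarith
    have hpn : ε * p / n ≤ ε * t := by
      rw [div_le_iff₀ hn]
      calc ε * p ≤ ε * (n * t) := by nlinarith
        _ = ε * t * n := by ring
    have h0 : 0 ≤ Real.exp (ε * t) - 1 - ε * p / n := by linarith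
    rw [hexp, hrw]
    calc (0:ℝ) ≤ Real.exp (ε*n) * (Real.exp (ε*t) - 1 - ε*p/n) := mul_nonneg hen.le h0
      _ = Real.exp (ε*n) * Real.exp (ε*t) - Real.exp (ε*n) - Real.exp (ε*n) * (ε*p/n) := by
          ring
  · have hq1 : Real.exp (ε * t) ≤ 1 + ε * t + (ε*t)^2 * Real.exp |ε * t| := exp_quad _
    have htabs : |t| ≤ ‖v‖ := abs_le.mpr ⟨h5, h4⟩
    have habs : |ε * t| ≤ ε * ‖v‖ := by
      rw [abs_mul, abs_of_pos hε]
      exact mul_le_mul_of_nonneg_left htabs hε.le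
    have hexpabs : Real.exp |ε * t| ≤ Real.exp (ε * ‖v‖) := Real.exp_le_exp.mpr habs
    have ht2 : (ε*t)^2 ≤ ε^2 * ‖v‖^2 := by
      calc (ε*t)^2 = ε^2 * t^2 := by ring
        _ ≤ ε^2 * ‖v‖^2 := mul_le_mul_of_nonneg_left htsq (sq_nonneg ε)
    have hq2 : Real.exp (ε * t) ≤ 1 + ε * t + ε^2 * ‖v‖^2 * Real.exp (ε * ‖v‖) := by
      have hm : (ε*t)^2 * Real.exp |ε*t| ≤ ε^2*‖v‖^2 * Real.exp (ε*‖v‖) :=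
        mul_le_mul ht2 hexpabs (Real.exp_pos _).le (by positivity)
      linarith
    have hts : ε * t - ε * p / n ≤ ε * ‖v‖^2 / (2*n) := by
      have hnum : n*t - p ≤ ‖v‖^2/2 := by linarith
      calc ε*t - ε*p/n = ε*(n*t-p)/n := by field_simp
        _ ≤ ε*(‖v‖^2/2)/n := by gcongr
        _ = ε*‖v‖^2/(2*n) := by ring
    have hkey : Real.exp (ε * t) - 1 - ε * p / n
        ≤ ε^2 * ‖v‖^2 * Real.exp (ε * ‖v‖) + ε * ‖v‖^2 / (2*n) := by linarith
    rw [hexp, hrw]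
    calc Real.exp (ε*n) * Real.exp (ε*t) - Real.exp (ε*n) - Real.exp (ε*n) * (ε*p/n)
        = Real.exp (ε*n) * (Real.exp (ε*t) - 1 - ε*p/n) := by ring
      _ ≤ Real.exp (ε*n) * (ε^2 * ‖v‖^2 * Real.exp (ε * ‖v‖) + ε * ‖v‖^2 / (2*n)) :=
          mul_le_mul_of_nonneg_left hkey hen.le

lemma coord_abs_le {d : ℕ} (x : EuclideanSpace ℝ (Fin d)) (i : Fin d) : |x i| ≤ ‖x‖ := by
  have h : ‖x i‖^2 ≤ ∑ j, ‖x j‖^2 :=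
    Finset.single_le_sum (f := fun j => ‖x j‖^2) (fun j _ => sq_nonneg _) (Finset.mem_univ i)
  calc |x i| = ‖x i‖ := (Real.norm_eq_abs _).symm
    _ = Real.sqrt (‖x i‖^2) := (Real.sqrt_sq (norm_nonneg _)).symm
    _ ≤ Real.sqrt (∑ j, ‖x j‖^2) := Real.sqrt_le_sqrt h
    _ = ‖x‖ := (EuclideanSpace.norm_eq x).symm

lemma inner_euclid {d : ℕ} (x y : EuclideanSpace ℝ (Fin d)) : ⟪x, y⟫ = ∑ i, x i * y i := by
  simp [PiLp.inner_apply, RCLike.inner_apply, conj_trivial]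
  exact Finset.sum_congr rfl fun i _ => mul_comm _ _

set_option maxHeartbeats 1000000 in
/-- Lyapunov function for the jump-diffusion generator: under the
drift condition, boundedness of `a` and `γ` and an exponential moment for the Lévy
density `F`, there are `ε ∈ (0, ε₀/γ_max]`, `c₁ > 0` and `R > 0` such that
`A f*(x) ≤ -c₁ f*(x)` for all `|x| ≥ R`, where `f*(x) = e^{ε|x|}` and `A` is the sum of
the continuous part `(1/2)Σ c_ij ∂²_ij f* + Σ b_i ∂_i f*` (with `c = a aᵀ`) and the jump
part `∫ (f*(x+γ(x)z) - f*(x) - (γ(x)z)·∇f*(x)) F(z) dz`. -/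
theorem stmt10 (d : ℕ) (hd : 1 ≤ d)
    (a : EuclideanSpace ℝ (Fin d) → Matrix (Fin d) (Fin d) ℝ)
    (ha_meas : ∀ i j, Measurable fun x => a x i j)
    (Ca : ℝ) (ha_bdd : ∀ x i j, |a x i j| ≤ Ca)
    (b : EuclideanSpace ℝ (Fin d) → EuclideanSpace ℝ (Fin d)) (hb_meas : Measurable b)
    (Ctil ρtil : ℝ) (hCtil : 0 < Ctil) (hρtil : 0 < ρtil)
    (hdrift : ∀ x : EuclideanSpace ℝ (Fin d), ρtil ≤ ‖x‖ → ⟪x, b x⟫ ≤ -Ctil * ‖x‖)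
    (γ : EuclideanSpace ℝ (Fin d) → Matrix (Fin d) (Fin d) ℝ)
    (hγ_meas : ∀ i j, Measurable fun x => γ x i j)
    (γmax : ℝ) (hγmax : 0 < γmax)
    (hγ_bdd : ∀ x z, ‖Matrix.toEuclideanLin (γ x) z‖ ≤ γmax * ‖z‖)
    (F : EuclideanSpace ℝ (Fin d) → ℝ) (hF_meas : Measurable F)
    (hF_nonneg : ∀ z, 0 ≤ F z)
    (ε₀ : ℝ) (hε₀ : 0 < ε₀)
    (hF_int : Integrable (fun z : EuclideanSpace ℝ (Fin d) =>
      ‖z‖ ^ 2 * Real.exp (ε₀ * ‖z‖) * F z)) :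
    ∃ ε ∈ Set.Ioc (0 : ℝ) (ε₀ / γmax), ∃ c₁ > (0 : ℝ), ∃ R > (0 : ℝ),
      ∀ x : EuclideanSpace ℝ (Fin d), R ≤ ‖x‖ →
        (1 / 2) * (∑ i, ∑ j, (a x * (a x)ᵀ) i j *
            (ε * (x i * x j / ‖x‖ ^ 2) * Real.exp (ε * ‖x‖) * (ε - 1 / ‖x‖)
              + (if i = j then ε * Real.exp (ε * ‖x‖) / ‖x‖ else 0)))
          + (∑ i, b x i * (ε * Real.exp (ε * ‖x‖) * x i / ‖x‖))
          + (∫ z : EuclideanSpace ℝ (Fin d),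
              (Real.exp (ε * ‖x + Matrix.toEuclideanLin (γ x) z‖) - Real.exp (ε * ‖x‖)
                - ⟪Matrix.toEuclideanLin (γ x) z,
                    (ε * Real.exp (ε * ‖x‖) / ‖x‖) • x⟫) * F z)
        ≤ -c₁ * Real.exp (ε * ‖x‖) := by
  classical
  have hCa0 : 0 ≤ Ca := le_trans (abs_nonneg _) (ha_bdd 0 ⟨0, hd⟩ ⟨0, hd⟩)
  set M : ℝ := ∫ z : EuclideanSpace ℝ (Fin d), ‖z‖^2 * Real.exp (ε₀ * ‖z‖) * F z with hM_def
  have hM0 : 0 ≤ M :=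
    integral_nonneg fun z => mul_nonneg (by positivity) (hF_nonneg z)
  set K1 : ℝ := (d:ℝ)^3 * Ca^2 with hK1_def
  have hK1 : 0 ≤ K1 := by positivity
  set ε : ℝ := min (ε₀/γmax) (Ctil/(4*(K1/2 + γmax^2*M + 1))) with hε_def
  have hden : (0:ℝ) < K1/2 + γmax^2*M + 1 := by positivity
  have hε : 0 < ε := lt_min (div_pos hε₀ hγmax) (div_pos hCtil (by positivity))
  have hεle : ε ≤ ε₀/γmax := min_le_left _ _
  have hεle2 : ε ≤ Ctil/(4*(K1/2 + γmax^2*M + 1)) := min_le_right _ _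
  have hεγ : ε * γmax ≤ ε₀ := by
    rw [← le_div_iff₀ hγmax]; exact hεle
  set R : ℝ := max (max ρtil 1) (4*(K1 + γmax^2*M/2 + 1)/Ctil) with hR_def
  have hR0 : 0 < R := lt_of_lt_of_le hρtil ((le_max_left _ _).trans (le_max_left _ _))
  clear_value M K1 ε R
  refine ⟨ε, ⟨hε, hεle⟩, ε*Ctil/2, by positivity, R, hR0, ?_⟩
  intro x hxR
  rw [hR_def] at hxR
  set n : ℝ := ‖x‖ with hn_def
  have hn1 : 1 ≤ n := le_trans ((le_max_right _ _).trans (le_max_left _ _)) hxR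
  have hn : 0 < n := lt_of_lt_of_le one_pos hn1
  have hx0 : x ≠ 0 := by
    intro h; rw [h] at hn_def; simp at hn_def; rw [hn_def] at hn; exact lt_irrefl 0 hn
  have hnρ : ρtil ≤ n := le_trans ((le_max_left _ _).trans (le_max_left _ _)) hxR
  have hnR : 4*(K1 + γmax^2*M/2 + 1)/Ctil ≤ n := le_trans (le_max_right _ _) hxR
  set e : ℝ := Real.exp (ε * n) with he_def
  have he : 0 < e := Real.exp_pos _
  clear_value n e
  -- Term 1 : second order
  have hterm1 : (1/2 : ℝ) * (∑ i, ∑ j, (a x * (a x)ᵀ) i j *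
      (ε * (x i * x j / n^2) * e * (ε - 1/n)
        + (if i = j then ε * e / n else 0)))
      ≤ (1/2) * (K1 * (ε*e*(ε + 2/n))) := by
    have hbound : ∀ i j : Fin d, (a x * (a x)ᵀ) i j *
        (ε * (x i * x j / n^2) * e * (ε - 1/n) + (if i = j then ε * e / n else 0))
        ≤ ((d:ℝ)*Ca^2)*(ε*e*(ε + 2/n)) := by
      intro i j
      have hc : |(a x * (a x)ᵀ) i j| ≤ (d:ℝ)*Ca^2 := by
        rw [Matrix.mul_apply]
        calc |∑ k, a x i k * (a x)ᵀ k j| = |∑ k, a x i k * a x j k| := by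
              simp [Matrix.transpose_apply]
          _ ≤ ∑ k, |a x i k * a x j k| := Finset.abs_sum_le_sum_abs _ _
          _ ≤ ∑ _k : Fin d, Ca^2 := Finset.sum_le_sum fun k _ => by
              rw [abs_mul]
              calc |a x i k| * |a x j k| ≤ Ca * Ca :=
                    mul_le_mul (ha_bdd x i k) (ha_bdd x j k) (abs_nonneg _) hCa0
                _ = Ca^2 := (sq Ca).symm
          _ = (d:ℝ)*Ca^2 := by
              simp [Finset.sum_const, Finset.card_univ, Fintype.card_fin, nsmul_eq_mul]
      have hxi : |x i| ≤ n := by rw [hn_def]; exact coord_abs_le x i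
      have hxj : |x j| ≤ n := by rw [hn_def]; exact coord_abs_le x j
      have h1 : |ε * (x i * x j / n^2) * e * (ε - 1/n)| ≤ ε*e*(ε + 1/n) := by
        rw [abs_mul, abs_mul, abs_mul, abs_of_pos hε, abs_of_pos he]
        have hq : |x i * x j / n^2| ≤ 1 := by
          rw [abs_div, abs_mul, abs_of_pos (pow_pos hn 2), div_le_one (pow_pos hn 2)]
          calc |x i| * |x j| ≤ n * n := mul_le_mul hxi hxj (abs_nonneg _) hn.le
            _ = n^2 := (sq n).symm
        have hdd : |ε - 1/n| ≤ ε + 1/n := by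
          have h0 : (0:ℝ) < 1/n := by positivity
          rw [abs_le]; constructor <;> linarith
        calc ε * |x i * x j / n^2| * e * |ε - 1/n| ≤ ε * 1 * e * (ε + 1/n) := by gcongr
          _ = ε*e*(ε + 1/n) := by ring
      have h2 : |(if i = j then ε * e / n else 0 : ℝ)| ≤ ε*e/n := by
        split
        · exact le_of_eq (abs_of_nonneg (by positivity))
        · rw [abs_zero]; positivity
      calc (a x * (a x)ᵀ) i j *
            (ε * (x i * x j / n^2) * e * (ε - 1/n) + (if i = j then ε * e / n else 0))
          ≤ |(a x * (a x)ᵀ) i j *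
            (ε * (x i * x j / n^2) * e * (ε - 1/n) + (if i = j then ε * e / n else 0))| :=
            le_abs_self _
        _ = |(a x * (a x)ᵀ) i j| *
            |ε * (x i * x j / n^2) * e * (ε - 1/n) + (if i = j then ε * e / n else 0)| :=
            abs_mul _ _
        _ ≤ ((d:ℝ)*Ca^2) * (ε*e*(ε + 1/n) + ε*e/n) := by
            apply mul_le_mul hc _ (abs_nonneg _) (by positivity)
            calc |ε * (x i * x j / n^2) * e * (ε - 1/n) + (if i = j then ε * e / n else 0)|
                ≤ |ε * (x i * x j / n^2) * e * (ε - 1/n)| + |(if i = j then ε * e / n else 0 : ℝ)| :=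
                  abs_add_le _ _
              _ ≤ ε*e*(ε + 1/n) + ε*e/n := add_le_add h1 h2
        _ = ((d:ℝ)*Ca^2)*(ε*e*(ε + 2/n)) := by
            have heq : ε*e*(ε + 1/n) + ε*e/n = ε*e*(ε + 2/n) := by field_simp; ring
            rw [heq]
    calc (1/2 : ℝ) * (∑ i, ∑ j, (a x * (a x)ᵀ) i j *
          (ε * (x i * x j / n^2) * e * (ε - 1/n) + (if i = j then ε * e / n else 0)))
        ≤ (1/2) * (∑ _i : Fin d, ∑ _j : Fin d, ((d:ℝ)*Ca^2)*(ε*e*(ε + 2/n))) := by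
          apply mul_le_mul_of_nonneg_left _ (by norm_num : (0:ℝ) ≤ 1/2)
          exact Finset.sum_le_sum fun i _ => Finset.sum_le_sum fun j _ => hbound i j
      _ = (1/2) * (K1 * (ε*e*(ε + 2/n))) := by
          rw [hK1_def]
          simp [Finset.sum_const, Finset.card_univ, Fintype.card_fin, nsmul_eq_mul]
          ring
  -- Term 2 : drift
  have hterm2 : (∑ i, b x i * (ε * e * x i / n)) ≤ -(ε*Ctil*e) := by
    have hsum : (∑ i, b x i * (ε * e * x i / n)) = (ε*e/n) * ⟪x, b x⟫ := by
      rw [inner_euclid, Finset.mul_sum]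
      exact Finset.sum_congr rfl fun i _ => by ring
    rw [hsum]
    have hpos : 0 ≤ ε*e/n := by positivity
    have hdx : ⟪x, b x⟫ ≤ -Ctil * n := by
      have h := hdrift x (by rw [← hn_def]; exact hnρ)
      rw [← hn_def] at h; exact h
    calc (ε*e/n) * ⟪x, b x⟫ ≤ (ε*e/n) * (-Ctil * n) :=
          mul_le_mul_of_nonneg_left hdx hpos
      _ = -(ε*Ctil*e) := by field_simp
  -- Term 3 : jump
  have hterm3 : (∫ z : EuclideanSpace ℝ (Fin d),
      (Real.exp (ε * ‖x + Matrix.toEuclideanLin (γ x) z‖) - e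
        - ⟪Matrix.toEuclideanLin (γ x) z, (ε * e / n) • x⟫) * F z)
      ≤ e*(ε^2*γmax^2*M) + e*ε*γmax^2/(2*n)*M := by
    set L := Matrix.toEuclideanLin (γ x) with hL_def
    have hinner : ∀ z, ⟪L z, (ε * e / n) • x⟫ = ε * e / n * ⟪L z, x⟫ := fun z =>
      real_inner_smul_right _ _ _
    have hM2 : Integrable (fun z : EuclideanSpace ℝ (Fin d) => ‖z‖^2 * F z) := by
      apply hF_int.mono'
      · exact ((measurable_norm.pow_const 2).mul hF_meas).aestronglyMeasurable
      · filter_upwards with z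
        rw [Real.norm_eq_abs, abs_of_nonneg (mul_nonneg (by positivity) (hF_nonneg z))]
        have h1 : (1:ℝ) ≤ Real.exp (ε₀*‖z‖) := Real.one_le_exp (by positivity)
        nlinarith [mul_nonneg (mul_nonneg (pow_nonneg (norm_nonneg z) 2) (hF_nonneg z))
          (sub_nonneg.mpr h1)]
    set M0 : ℝ := ∫ z : EuclideanSpace ℝ (Fin d), ‖z‖^2 * F z with hM0_def
    have hM0M : M0 ≤ M := by
      rw [hM0_def, hM_def]
      apply integral_mono hM2 hF_int
      intro z
      have h1 : (1:ℝ) ≤ Real.exp (ε₀*‖z‖) := Real.one_le_exp (by positivity)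
      simp only []
      nlinarith [mul_nonneg (mul_nonneg (pow_nonneg (norm_nonneg z) 2) (hF_nonneg z))
        (sub_nonneg.mpr h1)]
    have hlow : ∀ z, 0 ≤ (Real.exp (ε * ‖x + L z‖) - e - ⟪L z, (ε*e/n) • x⟫) * F z := by
      intro z
      apply mul_nonneg _ (hF_nonneg z)
      have hb := (jump_bound x (L z) hx0 ε hε).1
      rw [← hn_def, ← he_def] at hb
      rw [hinner z]
      exact hb
    have hup : ∀ z, (Real.exp (ε * ‖x + L z‖) - e - ⟪L z, (ε*e/n) • x⟫) * F z
        ≤ e*ε^2*γmax^2*(‖z‖^2*Real.exp (ε₀*‖z‖)*F z) + e*ε*γmax^2/(2*n)*(‖z‖^2*F z) := by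
      intro z
      have hb := (jump_bound x (L z) hx0 ε hε).2
      rw [← hn_def, ← he_def] at hb
      have hvn : ‖L z‖ ≤ γmax * ‖z‖ := hγ_bdd x z
      have hv2 : ‖L z‖^2 ≤ γmax^2*‖z‖^2 := by
        nlinarith [norm_nonneg (L z), norm_nonneg z, mul_nonneg hγmax.le (norm_nonneg z)]
      have hexpv : Real.exp (ε*‖L z‖) ≤ Real.exp (ε₀*‖z‖) := by
        apply Real.exp_le_exp.mpr
        calc ε*‖L z‖ ≤ ε*(γmax*‖z‖) := mul_le_mul_of_nonneg_left hvn hε.le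
          _ = (ε*γmax)*‖z‖ := by ring
          _ ≤ ε₀*‖z‖ := mul_le_mul_of_nonneg_right hεγ (norm_nonneg z)
      have ht1 : ε^2*‖L z‖^2*Real.exp (ε*‖L z‖) ≤ ε^2*(γmax^2*‖z‖^2)*Real.exp (ε₀*‖z‖) :=
        mul_le_mul (mul_le_mul_of_nonneg_left hv2 (sq_nonneg ε)) hexpv
          (Real.exp_pos _).le (by positivity)
      have ht2 : ε*‖L z‖^2/(2*n) ≤ ε*(γmax^2*‖z‖^2)/(2*n) := by gcongr
      have hcore : Real.exp (ε*‖x + L z‖) - e - ε*e/n*⟪L z, x⟫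
          ≤ e*(ε^2*(γmax^2*‖z‖^2)*Real.exp (ε₀*‖z‖) + ε*(γmax^2*‖z‖^2)/(2*n)) :=
        le_trans hb (mul_le_mul_of_nonneg_left (add_le_add ht1 ht2) he.le)
      rw [hinner z]
      calc (Real.exp (ε*‖x + L z‖) - e - ε*e/n*⟪L z, x⟫) * F z
          ≤ (e*(ε^2*(γmax^2*‖z‖^2)*Real.exp (ε₀*‖z‖) + ε*(γmax^2*‖z‖^2)/(2*n))) * F z :=
            mul_le_mul_of_nonneg_right hcore (hF_nonneg z)
        _ = e*ε^2*γmax^2*(‖z‖^2*Real.exp (ε₀*‖z‖)*F z) + e*ε*γmax^2/(2*n)*(‖z‖^2*F z) := by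
            ring
    have hdom : Integrable (fun z : EuclideanSpace ℝ (Fin d) =>
        e*ε^2*γmax^2*(‖z‖^2*Real.exp (ε₀*‖z‖)*F z) + e*ε*γmax^2/(2*n)*(‖z‖^2*F z)) :=
      (hF_int.const_mul _).add (hM2.const_mul _)
    have hint : (∫ z : EuclideanSpace ℝ (Fin d),
        (Real.exp (ε * ‖x + L z‖) - e - ⟪L z, (ε*e/n) • x⟫) * F z)
        ≤ ∫ z : EuclideanSpace ℝ (Fin d),
          (e*ε^2*γmax^2*(‖z‖^2*Real.exp (ε₀*‖z‖)*F z) + e*ε*γmax^2/(2*n)*(‖z‖^2*F z)) :=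
      integral_mono_of_nonneg (ae_of_all _ hlow) hdom (ae_of_all _ hup)
    have hval : (∫ z : EuclideanSpace ℝ (Fin d),
          (e*ε^2*γmax^2*(‖z‖^2*Real.exp (ε₀*‖z‖)*F z) + e*ε*γmax^2/(2*n)*(‖z‖^2*F z)))
        = e*ε^2*γmax^2*M + e*ε*γmax^2/(2*n)*M0 := by
      rw [integral_add (hF_int.const_mul _) (hM2.const_mul _), integral_const_mul,
        integral_const_mul, ← hM_def, ← hM0_def]
    refine le_trans hint ?_
    rw [hval]
    have hlast : e*ε*γmax^2/(2*n)*M0 ≤ e*ε*γmax^2/(2*n)*M :=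
      mul_le_mul_of_nonneg_left hM0M (by positivity)
    nlinarith [hlast]
  -- assembly
  have hb1 : ε*(K1/2+γmax^2*M) ≤ Ctil/4 := by
    have h1 : ε*(K1/2+γmax^2*M) ≤ Ctil/(4*(K1/2 + γmax^2*M + 1))*(K1/2+γmax^2*M) :=
      mul_le_mul_of_nonneg_right hεle2 (by positivity)
    have h2 : Ctil/(4*(K1/2 + γmax^2*M + 1))*(K1/2+γmax^2*M) ≤ Ctil/4 := by
      rw [div_mul_eq_mul_div, div_le_div_iff₀ (by positivity) (by positivity : (0:ℝ) < 4)]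
      nlinarith [mul_nonneg hCtil.le hK1, mul_nonneg hCtil.le (mul_nonneg (sq_nonneg γmax) hM0)]
    linarith
  have hb2 : (K1+γmax^2*M/2)/n ≤ Ctil/4 := by
    have hd2 : (0:ℝ) < 4*(K1 + γmax^2*M/2 + 1)/Ctil := by positivity
    have hinv : 1/n ≤ Ctil/(4*(K1 + γmax^2*M/2 + 1)) := by
      have hmul := mul_le_mul_of_nonneg_right hnR hCtil.le
      rw [div_mul_cancel₀ _ hCtil.ne'] at hmul
      rw [div_le_div_iff₀ hn (by positivity)]
      nlinarith
    have h1 : (K1+γmax^2*M/2)/n = (K1+γmax^2*M/2) * (1/n) := by ring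
    have h2 : (K1+γmax^2*M/2) * (1/n) ≤ (K1+γmax^2*M/2) * (Ctil/(4*(K1 + γmax^2*M/2 + 1))) :=
      mul_le_mul_of_nonneg_left hinv (by positivity)
    have h3 : (K1+γmax^2*M/2) * (Ctil/(4*(K1 + γmax^2*M/2 + 1))) ≤ Ctil/4 := by
      rw [mul_comm, div_mul_eq_mul_div, div_le_div_iff₀ (by positivity) (by positivity : (0:ℝ) < 4)]
      nlinarith [mul_nonneg hCtil.le hK1, mul_nonneg hCtil.le (mul_nonneg (sq_nonneg γmax) hM0)]
    calc (K1+γmax^2*M/2)/n = (K1+γmax^2*M/2) * (1/n) := h1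
      _ ≤ (K1+γmax^2*M/2) * (Ctil/(4*(K1 + γmax^2*M/2 + 1))) := h2
      _ ≤ Ctil/4 := h3
  have hfinal : (1/2) * (K1 * (ε*e*(ε + 2/n))) + (-(ε*Ctil*e))
      + (e*(ε^2*γmax^2*M) + e*ε*γmax^2/(2*n)*M) ≤ -(ε*Ctil/2)*e := by
    have hA : ε*e*(ε*(K1/2+γmax^2*M)) ≤ ε*e*(Ctil/4) :=
      mul_le_mul_of_nonneg_left hb1 (by positivity)
    have hB : ε*e*((K1+γmax^2*M/2)/n) ≤ ε*e*(Ctil/4) :=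
      mul_le_mul_of_nonneg_left hb2 (by positivity)
    have hexp1 : (1/2) * (K1 * (ε*e*(ε + 2/n))) + (e*(ε^2*γmax^2*M) + e*ε*γmax^2/(2*n)*M)
        = ε*e*(ε*(K1/2+γmax^2*M)) + ε*e*((K1+γmax^2*M/2)/n) := by
      field_simp; ring
    nlinarith
  calc (1/2 : ℝ) * (∑ i, ∑ j, (a x * (a x)ᵀ) i j *
            (ε * (x i * x j / n^2) * e * (ε - 1/n)
              + (if i = j then ε * e / n else 0)))
          + (∑ i, b x i * (ε * e * x i / n))
          + (∫ z : EuclideanSpace ℝ (Fin d),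
              (Real.exp (ε * ‖x + Matrix.toEuclideanLin (γ x) z‖) - e
                - ⟪Matrix.toEuclideanLin (γ x) z, (ε * e / n) • x⟫) * F z)
      ≤ (1/2) * (K1 * (ε*e*(ε + 2/n))) + (-(ε*Ctil*e))
          + (e*(ε^2*γmax^2*M) + e*ε*γmax^2/(2*n)*M) :=
        add_le_add (add_le_add hterm1 hterm2) hterm3
    _ ≤ -(ε*Ctil/2)*e := hfinal
end

section
/- Let d ≥ 1, ε > 0, γ_max ∈ (0,∞), and set f*(x) := e^{ε|x|}. Let γ : ℝ^d → ℝ^{d×d} be measurable with sup_x ‖γ(x)‖ ≤ γ_max, and let F : ℝ^d → [0,∞) be measurable with m := ∫_{ℝ^d} |z|² e^{ε γ_max |z|} F(z) dz < ∞. Then there exists a constant C, depending only on γ_max and m, such that for every x ≠ 0: ∫_{{z : |z| ≤ |x|/(2γ_max)}} | f*(x + γ(x)z) − f*(x) − (γ(x)z)·∇f*(x) | F(z) dz ≤ C ε e^{ε|x|} (ε + 1/|x|). -/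
set_option maxHeartbeats 1000000

open Real MeasureTheory
open scoped RealInnerProductSpace

lemma exp_taylor1 (s : ℝ) : |Real.exp s - 1 - s| ≤ s ^ 2 * Real.exp |s| := by
  have h0 : 0 ≤ Real.exp s - 1 - s := by linarith [Real.add_one_le_exp s]
  rw [abs_of_nonneg h0]
  rcases le_or_gt 0 s with hs | hs
  · rw [abs_of_nonneg hs]
    have h1 : Real.exp s - 1 ≤ s * Real.exp s := by
      have h2 : Real.exp s * Real.exp (-s) = 1 := by rw [← Real.exp_add]; simp
      have h3 : 1 - s ≤ Real.exp (-s) := by linarith [Real.add_one_le_exp (-s)]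
      nlinarith [Real.exp_pos s]
    nlinarith [Real.exp_pos s]
  · rw [abs_of_neg hs]
    have h2 : Real.exp s * Real.exp (-s) = 1 := by rw [← Real.exp_add]; simp
    have h3 : 1 - s ≤ Real.exp (-s) := by linarith [Real.add_one_le_exp (-s)]
    have h4 : (1:ℝ) ≤ Real.exp (-s) := by linarith
    have h5 : Real.exp s - 1 ≤ s * Real.exp s := by nlinarith [Real.exp_pos s]
    nlinarith [Real.exp_pos s, sq_nonneg s]

lemma norm_taylor1 {d : ℕ} (x v : EuclideanSpace ℝ (Fin d)) (hx : x ≠ 0)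
    (hv : ‖v‖ ≤ ‖x‖ / 2) :
    |‖x + v‖ - ‖x‖ - ⟪x, v⟫ / ‖x‖| ≤ ‖v‖ ^ 2 / ‖x‖ := by
  have ha0 : 0 < ‖x‖ := norm_pos_iff.mpr hx
  set a := ‖x‖ with ha
  set b := ‖x + v‖ with hb
  set t : ℝ := ⟪x, v⟫ / a with ht
  have h2 : a * t = ⟪x, v⟫ := by rw [ht]; field_simp [ha0.ne']
  have hbsq : b ^ 2 = a ^ 2 + 2 * (a * t) + ‖v‖ ^ 2 := by
    rw [hb, norm_add_sq_real, h2, ha]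
  have htle : |t| ≤ ‖v‖ := by
    rw [ht, abs_div, abs_of_pos ha0, div_le_iff₀ ha0]
    calc |⟪x, v⟫| ≤ ‖x‖ * ‖v‖ := abs_real_inner_le_norm x v
      _ = ‖v‖ * a := by rw [ha]; ring
  have htge : -‖v‖ ≤ t := by linarith [neg_abs_le t, neg_le_neg htle]
  have htle' : t ≤ ‖v‖ := le_trans (le_abs_self t) htle
  have hat : a / 2 ≤ a + t := by linarith
  have hb0 : 0 ≤ b := norm_nonneg _
  have htsq : t ^ 2 ≤ ‖v‖ ^ 2 := by nlinarith
  have hbge : a + t ≤ b := by nlinarith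
  have hkey : b - (a + t) ≤ ‖v‖ ^ 2 / a := by
    rw [le_div_iff₀ ha0]
    nlinarith [sq_nonneg t]
  rw [abs_of_nonneg (by linarith : (0:ℝ) ≤ b - a - t)]
  linarith

/-- Bound on the small-jump part of the generator applied to
`f*(x) = e^{ε|x|}`: if `‖γ(x)z‖ ≤ γ_max ‖z‖` and `m = ∫ |z|² e^{ε γ_max |z|} F(z) dz < ∞`,
then for a constant `C` depending only on `γ_max` and `m`,
`∫_{|z| ≤ |x|/(2γ_max)} |f*(x+γ(x)z) - f*(x) - (γ(x)z)·∇f*(x)| F(z) dz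
  ≤ C ε e^{ε|x|}(ε + 1/|x|)` for every `x ≠ 0`. -/
theorem stmt12 (d : ℕ) (hd : 1 ≤ d) (ε γmax : ℝ) (hε : 0 < ε) (hγmax : 0 < γmax)
    (γ : EuclideanSpace ℝ (Fin d) → Matrix (Fin d) (Fin d) ℝ)
    (hγ_meas : ∀ i j, Measurable fun x => γ x i j)
    (hγ_bdd : ∀ x z, ‖Matrix.toEuclideanLin (γ x) z‖ ≤ γmax * ‖z‖)
    (F : EuclideanSpace ℝ (Fin d) → ℝ) (hF_meas : Measurable F)
    (hF_nonneg : ∀ z, 0 ≤ F z) (m : ℝ)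
    (hF_int : Integrable (fun z : EuclideanSpace ℝ (Fin d) =>
      ‖z‖ ^ 2 * Real.exp (ε * γmax * ‖z‖) * F z))
    (hm : (∫ z : EuclideanSpace ℝ (Fin d), ‖z‖ ^ 2 * Real.exp (ε * γmax * ‖z‖) * F z) = m) :
    ∃ C > (0 : ℝ), ∀ x : EuclideanSpace ℝ (Fin d), x ≠ 0 →
      (∫ z in {z : EuclideanSpace ℝ (Fin d) | ‖z‖ ≤ ‖x‖ / (2 * γmax)},
          |Real.exp (ε * ‖x + Matrix.toEuclideanLin (γ x) z‖) - Real.exp (ε * ‖x‖)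
            - ⟪Matrix.toEuclideanLin (γ x) z,
                (ε * Real.exp (ε * ‖x‖) / ‖x‖) • x⟫| * F z)
        ≤ C * ε * Real.exp (ε * ‖x‖) * (ε + 1 / ‖x‖) := by
  have hm0 : 0 ≤ m := by
    rw [← hm]; apply integral_nonneg; intro z
    exact mul_nonneg (by positivity) (hF_nonneg z)
  refine ⟨γmax ^ 2 * m + 1, by nlinarith [sq_nonneg γmax, hm0, mul_nonneg (sq_nonneg γmax) hm0], ?_⟩
  intro x hx
  have ha0 : 0 < ‖x‖ := norm_pos_iff.mpr hx
  set a := ‖x‖ with ha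
  have ha1 : 0 < 1 / a := by positivity
  have hεa : 0 < ε + 1 / a := by linarith
  set S : Set (EuclideanSpace ℝ (Fin d)) := {z | ‖z‖ ≤ a / (2 * γmax)} with hS
  have hS_meas : MeasurableSet S :=
    (isClosed_le continuous_norm continuous_const).measurableSet
  set T : EuclideanSpace ℝ (Fin d) → EuclideanSpace ℝ (Fin d) :=
    fun z => Matrix.toEuclideanLin (γ x) z with hT
  set K : ℝ := γmax ^ 2 * ε * Real.exp (ε * a) * (ε + 1 / a) with hK
  have hK0 : 0 ≤ K :=
    le_of_lt (mul_pos (mul_pos (mul_pos (pow_pos hγmax 2) hε) (Real.exp_pos _)) hεa)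
  set h : EuclideanSpace ℝ (Fin d) → ℝ := fun z =>
    |Real.exp (ε * ‖x + T z‖) - Real.exp (ε * a)
      - ⟪T z, (ε * Real.exp (ε * a) / a) • x⟫| * F z with hh
  set g : EuclideanSpace ℝ (Fin d) → ℝ := fun z =>
    ‖z‖ ^ 2 * Real.exp (ε * γmax * ‖z‖) * F z with hg
  have hpt : ∀ z ∈ S, h z ≤ K * g z := by
    intro z hz
    have hzS : ‖z‖ ≤ a / (2 * γmax) := hz
    set v := T z with hv
    have hvle : ‖v‖ ≤ γmax * ‖z‖ := hγ_bdd x z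
    have hv2 : ‖v‖ ≤ a / 2 := by
      calc ‖v‖ ≤ γmax * ‖z‖ := hvle
        _ ≤ γmax * (a / (2 * γmax)) := by nlinarith
        _ = a / 2 := by field_simp
    set b := ‖x + v‖ with hb
    set t : ℝ := ⟪x, v⟫ / a with ht
    have hinner : ⟪v, (ε * Real.exp (ε * a) / a) • x⟫ = ε * Real.exp (ε * a) * t := by
      rw [real_inner_smul_right, real_inner_comm]
      rw [ht]; field_simp
    have hnt : |b - a - t| ≤ ‖v‖ ^ 2 / a := norm_taylor1 x v hx hv2
    have hbma : |b - a| ≤ ‖v‖ := by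
      have h1 : b ≤ a + ‖v‖ := by rw [hb, ha]; exact norm_add_le x v
      have h2 : a ≤ b + ‖v‖ := by
        rw [hb, ha]
        calc ‖x‖ = ‖x + v + (-v)‖ := by simp
          _ ≤ ‖x + v‖ + ‖v‖ := by simpa using norm_add_le (x + v) (-v)
      rw [abs_sub_le_iff]
      exact ⟨by linarith, by linarith⟩
    set s : ℝ := ε * (b - a) with hs
    have hexp1 : |Real.exp (ε * b) - Real.exp (ε * a) - Real.exp (ε * a) * s|
        ≤ Real.exp (ε * a) * (s ^ 2 * Real.exp |s|) := by
      have hrw : Real.exp (ε * b) - Real.exp (ε * a) - Real.exp (ε * a) * s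
          = Real.exp (ε * a) * (Real.exp s - 1 - s) := by
        rw [show Real.exp (ε * b) = Real.exp (ε * a) * Real.exp s by
          rw [← Real.exp_add]; congr 1; rw [hs]; ring]
        ring
      rw [hrw, abs_mul, abs_of_pos (Real.exp_pos _)]
      exact mul_le_mul_of_nonneg_left (exp_taylor1 s) (Real.exp_pos _).le
    have hsabs : |s| ≤ ε * ‖v‖ := by
      rw [hs, abs_mul, abs_of_pos hε]
      exact mul_le_mul_of_nonneg_left hbma hε.le
    have hsq : s ^ 2 * Real.exp |s| ≤ ε ^ 2 * ‖v‖ ^ 2 * Real.exp (ε * ‖v‖) := by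
      have h1 : s ^ 2 ≤ (ε * ‖v‖) ^ 2 := by
        rw [← sq_abs s]; exact pow_le_pow_left₀ (abs_nonneg s) hsabs 2
      have h2 : Real.exp |s| ≤ Real.exp (ε * ‖v‖) := Real.exp_le_exp.mpr hsabs
      calc s ^ 2 * Real.exp |s| ≤ (ε * ‖v‖) ^ 2 * Real.exp (ε * ‖v‖) :=
            mul_le_mul h1 h2 (Real.exp_pos _).le (by positivity)
        _ = ε ^ 2 * ‖v‖ ^ 2 * Real.exp (ε * ‖v‖) := by ring
    have hmain : |Real.exp (ε * b) - Real.exp (ε * a) - ⟪v, (ε * Real.exp (ε * a) / a) • x⟫|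
        ≤ ε * Real.exp (ε * a) * (ε + 1 / a) * (‖v‖ ^ 2 * Real.exp (ε * ‖v‖)) := by
      have step : |Real.exp (ε * b) - Real.exp (ε * a) - ⟪v, (ε * Real.exp (ε * a) / a) • x⟫|
          ≤ |Real.exp (ε * b) - Real.exp (ε * a) - Real.exp (ε * a) * s|
            + ε * Real.exp (ε * a) * |b - a - t| := by
        rw [hinner]
        have hsplit : Real.exp (ε * b) - Real.exp (ε * a) - ε * Real.exp (ε * a) * t
            = (Real.exp (ε * b) - Real.exp (ε * a) - Real.exp (ε * a) * s)
              + ε * Real.exp (ε * a) * (b - a - t) := by rw [hs]; ring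
        rw [hsplit]
        refine le_trans (abs_add_le _ _) ?_
        rw [abs_mul, abs_of_pos (by positivity : (0:ℝ) < ε * Real.exp (ε * a))]
      have hbnd1 : |Real.exp (ε * b) - Real.exp (ε * a) - Real.exp (ε * a) * s|
          ≤ Real.exp (ε * a) * (ε ^ 2 * ‖v‖ ^ 2 * Real.exp (ε * ‖v‖)) :=
        le_trans hexp1 (mul_le_mul_of_nonneg_left hsq (Real.exp_pos _).le)
      have hbnd2 : ε * Real.exp (ε * a) * |b - a - t| ≤ ε * Real.exp (ε * a) * (‖v‖ ^ 2 / a) :=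
        mul_le_mul_of_nonneg_left hnt (by positivity)
      have hexpv : (1:ℝ) ≤ Real.exp (ε * ‖v‖) := Real.one_le_exp (by positivity)
      have hva : ‖v‖ ^ 2 / a ≤ ‖v‖ ^ 2 / a * Real.exp (ε * ‖v‖) := by
        nlinarith [div_nonneg (sq_nonneg ‖v‖) ha0.le]
      have expand : ε * Real.exp (ε * a) * (ε + 1 / a) * (‖v‖ ^ 2 * Real.exp (ε * ‖v‖))
          = Real.exp (ε * a) * (ε ^ 2 * ‖v‖ ^ 2 * Real.exp (ε * ‖v‖))
            + ε * Real.exp (ε * a) * (‖v‖ ^ 2 / a * Real.exp (ε * ‖v‖)) := by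
        field_simp
      have hmono := mul_le_mul_of_nonneg_left hva
        (by positivity : (0:ℝ) ≤ ε * Real.exp (ε * a))
      calc |Real.exp (ε * b) - Real.exp (ε * a) - ⟪v, (ε * Real.exp (ε * a) / a) • x⟫|
          ≤ Real.exp (ε * a) * (ε ^ 2 * ‖v‖ ^ 2 * Real.exp (ε * ‖v‖))
            + ε * Real.exp (ε * a) * (‖v‖ ^ 2 / a) := by linarith
        _ ≤ Real.exp (ε * a) * (ε ^ 2 * ‖v‖ ^ 2 * Real.exp (ε * ‖v‖))
            + ε * Real.exp (ε * a) * (‖v‖ ^ 2 / a * Real.exp (ε * ‖v‖)) := by linarith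
        _ = ε * Real.exp (ε * a) * (ε + 1 / a) * (‖v‖ ^ 2 * Real.exp (ε * ‖v‖)) := expand.symm
    have hvz : ‖v‖ ^ 2 * Real.exp (ε * ‖v‖) ≤ γmax ^ 2 * ‖z‖ ^ 2 * Real.exp (ε * γmax * ‖z‖) := by
      have h1 : ‖v‖ ^ 2 ≤ (γmax * ‖z‖) ^ 2 := pow_le_pow_left₀ (norm_nonneg v) hvle 2
      have h2 : Real.exp (ε * ‖v‖) ≤ Real.exp (ε * γmax * ‖z‖) := by
        apply Real.exp_le_exp.mpr
        calc ε * ‖v‖ ≤ ε * (γmax * ‖z‖) := mul_le_mul_of_nonneg_left hvle hε.le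
          _ = ε * γmax * ‖z‖ := by ring
      calc ‖v‖ ^ 2 * Real.exp (ε * ‖v‖) ≤ (γmax * ‖z‖) ^ 2 * Real.exp (ε * γmax * ‖z‖) :=
            mul_le_mul h1 h2 (Real.exp_pos _).le (by positivity)
        _ = γmax ^ 2 * ‖z‖ ^ 2 * Real.exp (ε * γmax * ‖z‖) := by ring
    calc h z ≤ (ε * Real.exp (ε * a) * (ε + 1 / a) * (‖v‖ ^ 2 * Real.exp (ε * ‖v‖))) * F z :=
          mul_le_mul_of_nonneg_right hmain (hF_nonneg z)
      _ ≤ (ε * Real.exp (ε * a) * (ε + 1 / a)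
            * (γmax ^ 2 * ‖z‖ ^ 2 * Real.exp (ε * γmax * ‖z‖))) * F z := by
          refine mul_le_mul_of_nonneg_right ?_ (hF_nonneg z)
          exact mul_le_mul_of_nonneg_left hvz
            (le_of_lt (mul_pos (mul_pos hε (Real.exp_pos _)) hεa))
      _ = K * g z := by rw [hK, hg]; ring
  have hT_cont : Continuous T := LinearMap.continuous_of_finiteDimensional _
  have hh_meas : Measurable h := by
    apply Measurable.mul _ hF_meas
    apply Continuous.measurable
    apply Continuous.abs
    apply Continuous.sub
    · apply Continuous.sub
      · exact Real.continuous_exp.comp (continuous_const.mul ((continuous_const.add hT_cont).norm))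
      · exact continuous_const
    · exact continuous_inner.comp (hT_cont.prodMk continuous_const)
  have hh_nonneg : ∀ z, 0 ≤ h z := fun z => mul_nonneg (abs_nonneg _) (hF_nonneg z)
  have hg_nonneg : ∀ z, 0 ≤ g z := fun z => mul_nonneg (by positivity) (hF_nonneg z)
  have hKg_int : IntegrableOn (fun z => K * g z) S volume :=
    (hF_int.const_mul K).integrableOn
  have hh_int : IntegrableOn h S volume := by
    apply Integrable.mono' hKg_int hh_meas.aestronglyMeasurable.restrict
    filter_upwards [ae_restrict_mem hS_meas] with z hz
    rw [Real.norm_eq_abs, abs_of_nonneg (hh_nonneg z)]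
    exact hpt z hz
  have hP : (0:ℝ) ≤ ε * Real.exp (ε * a) * (ε + 1 / a) :=
    le_of_lt (mul_pos (mul_pos hε (Real.exp_pos _)) hεa)
  calc (∫ z in S, h z) ≤ ∫ z in S, K * g z :=
        setIntegral_mono_on hh_int hKg_int hS_meas hpt
    _ = K * ∫ z in S, g z := by rw [integral_const_mul]
    _ ≤ K * ∫ z, g z := by
        apply mul_le_mul_of_nonneg_left _ hK0
        apply setIntegral_le_integral hF_int
        filter_upwards with z using hg_nonneg z
    _ = K * m := by rw [hm]
    _ = (γmax ^ 2 * m) * (ε * Real.exp (ε * a) * (ε + 1 / a)) := by rw [hK]; ring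
    _ ≤ (γmax ^ 2 * m + 1) * (ε * Real.exp (ε * a) * (ε + 1 / a)) := by
        refine mul_le_mul_of_nonneg_right (by linarith) hP
    _ = (γmax ^ 2 * m + 1) * ε * Real.exp (ε * a) * (ε + 1 / a) := by ring
end
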